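/- arXiv:1810.07897 — 8 statements merged into one kernel-verified Lean document; each statement's English description precedes it below -/
import Mathlib

section
/- Let m be a probability measure on 𝒳 ⊆ ℝ^p, let π, π' : 𝒳 → [0,1] be measurable, and let F₀, F₁, F₁' be distribution functions on ℝ. If there exists a real number c ≠ 1 such that π'(x) = π(x)/(1 − c) for m-almost every x and F₁'(y) = c F₀(y) + (1 − c) F₁(y) for every y ∈ ℝ, then the joint distributions P_{π,F₁} and P_{π',F₁'} are identical. -/
open MeasureTheory ProbabilityTheory

noncomputable section

/-- `F` is a distribution function on `ℝ`: nondecreasing, right-continuous,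
with limits `0` at `-∞` and `1` at `+∞`. -/
def IsDistFun (F : ℝ → ℝ) : Prop :=
  Monotone F ∧ (∀ y : ℝ, ContinuousWithinAt F (Set.Ici y) y) ∧
    Filter.Tendsto F Filter.atBot (nhds 0) ∧ Filter.Tendsto F Filter.atTop (nhds 1)

/-- Equality of the joint distributions `P_{π₁,F₁}` and `P_{π₂,F₂}` of `(X, Y)` in the
covariate-dependent two-groups model with covariate distribution `m` and null distribution
function `F0`: the measures of all rectangles `A × (-∞, y]` agree. -/
def JointEq {α : Type*} [MeasurableSpace α] (m : Measure α)
    (F0 : ℝ → ℝ) (π₁ : α → ℝ) (F₁ : ℝ → ℝ) (π₂ : α → ℝ) (F₂ : ℝ → ℝ) : Prop :=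
  ∀ A : Set α, MeasurableSet A → ∀ y : ℝ,
    ∫ x in A, (π₁ x * F₁ y + (1 - π₁ x) * F0 y) ∂m
      = ∫ x in A, (π₂ x * F₂ y + (1 - π₂ x) * F0 y) ∂m

/-- Lemma `lem:bid`, part (b) ⇒ (a): if there is `c ≠ 1` with
`π' = π/(1-c)` `m`-a.e. and `F₁' = c F₀ + (1-c) F₁` everywhere, then the joint
distributions `P_{π,F₁}` and `P_{π',F₁'}` coincide. -/
theorem stmt_0 {p : ℕ} (m : Measure (EuclideanSpace ℝ (Fin p))) (hm : IsProbabilityMeasure m)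
    (π π' : EuclideanSpace ℝ (Fin p) → ℝ) (hπ : Measurable π) (hπ' : Measurable π')
    (hπ01 : ∀ x, π x ∈ Set.Icc (0:ℝ) 1) (hπ'01 : ∀ x, π' x ∈ Set.Icc (0:ℝ) 1)
    (F0 F1 F1' : ℝ → ℝ) (hF0 : IsDistFun F0) (hF1 : IsDistFun F1) (hF1' : IsDistFun F1')
    (c : ℝ) (hc : c ≠ 1)
    (h1 : ∀ᵐ x ∂m, π' x = π x / (1 - c))
    (h2 : ∀ y : ℝ, F1' y = c * F0 y + (1 - c) * F1 y) :
    JointEq m F0 π F1 π' F1' := by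
  intro A hA y
  have hc' : (1 - c) ≠ 0 := sub_ne_zero.mpr (Ne.symm hc)
  refine integral_congr_ae ?_
  filter_upwards [ae_restrict_of_ae h1] with x hx
  rw [hx, h2 y]
  field_simp
  ring

end
end

section
/- Let m be a probability measure on 𝒳 ⊆ ℝ^p, let π, π' : 𝒳 → [0,1] be measurable, and let F₀, F₁, F₁' be distribution functions on ℝ. Suppose P_{π,F₁} = P_{π',F₁'}, F₀ ≠ F₁, and m({x : π(x) > 0}) > 0. Then there exists a real number c ≠ 1 such that π'(x) = π(x)/(1 − c) for m-almost every x and F₁'(y) = c F₀(y) + (1 − c) F₁(y) for every y ∈ ℝ. -/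
open MeasureTheory ProbabilityTheory

noncomputable section

/-- Lemma `lem:bid`, part (a) ⇒ (b): if the joint distributions
`P_{π,F₁}` and `P_{π',F₁'}` coincide, `F₀ ≠ F₁`, and `π > 0` with positive `m`-probability,
then there is a real `c ≠ 1` with `π' = π/(1-c)` `m`-a.e. and
`F₁' = c F₀ + (1-c) F₁` everywhere. -/
theorem stmt_1 {p : ℕ} (m : Measure (EuclideanSpace ℝ (Fin p))) (hm : IsProbabilityMeasure m)
    (π π' : EuclideanSpace ℝ (Fin p) → ℝ) (hπ : Measurable π) (hπ' : Measurable π')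
    (hπ01 : ∀ x, π x ∈ Set.Icc (0:ℝ) 1) (hπ'01 : ∀ x, π' x ∈ Set.Icc (0:ℝ) 1)
    (F0 F1 F1' : ℝ → ℝ) (hF0 : IsDistFun F0) (hF1 : IsDistFun F1) (hF1' : IsDistFun F1')
    (heq : JointEq m F0 π F1 π' F1')
    (hF01 : F0 ≠ F1)
    (hpos : 0 < m {x | 0 < π x}) :
    ∃ c : ℝ, c ≠ 1 ∧ (∀ᵐ x ∂m, π' x = π x / (1 - c)) ∧
      ∀ y : ℝ, F1' y = c * F0 y + (1 - c) * F1 y := by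
  classical
  -- integrability of π and π'
  have hbd : ∀ (f : EuclideanSpace ℝ (Fin p) → ℝ), Measurable f → (∀ x, f x ∈ Set.Icc (0:ℝ) 1) →
      Integrable f m := by
    intro f hf h01
    refine (integrable_const (1:ℝ)).mono' hf.aestronglyMeasurable ?_
    filter_upwards with x
    rw [Real.norm_eq_abs, abs_le]
    exact ⟨by linarith [(h01 x).1], (h01 x).2⟩
  have hintπ : Integrable π m := hbd π hπ hπ01
  have hintπ' : Integrable π' m := hbd π' hπ' hπ'01
  -- expansion of the integrals
  have expand : ∀ (f : EuclideanSpace ℝ (Fin p) → ℝ), Integrable f m → ∀ A : Set (EuclideanSpace ℝ (Fin p)), MeasurableSet A →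
      ∀ u v : ℝ, ∫ x in A, (f x * u + (1 - f x) * v) ∂m
        = (∫ x in A, f x ∂m) * u + ((m A).toReal - ∫ x in A, f x ∂m) * v := by
    intro f hf A hA u v
    have hrw : ∀ x, f x * u + (1 - f x) * v = f x * (u - v) + v := by intro x; ring
    simp only [hrw]
    rw [integral_add ((hf.restrict).mul_const (u - v)) (integrable_const v).restrict,
      integral_mul_const, setIntegral_const]
    simp only [smul_eq_mul, measureReal_def]
    ring
  -- key identity
  have key : ∀ A : Set (EuclideanSpace ℝ (Fin p)), MeasurableSet A → ∀ y : ℝ,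
      (∫ x in A, π x ∂m) * (F1 y - F0 y) = (∫ x in A, π' x ∂m) * (F1' y - F0 y) := by
    intro A hA y
    have h := heq A hA y
    rw [expand π hintπ A hA, expand π' hintπ' A hA] at h
    linear_combination h
  -- a point where F0 and F1 differ
  obtain ⟨y₀, hy₀⟩ : ∃ y, F0 y ≠ F1 y := by
    by_contra h
    push_neg at h
    exact hF01 (funext h)
  set a : ℝ := ∫ x, π x ∂m with ha_def
  set a' : ℝ := ∫ x, π' x ∂m with ha'_def
  have ha : 0 < a := by
    rw [ha_def, integral_pos_iff_support_of_nonneg (fun x => (hπ01 x).1) hintπ]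
    refine lt_of_lt_of_le hpos (measure_mono ?_)
    intro x hx
    exact ne_of_gt hx
  set d : ℝ := F1 y₀ - F0 y₀ with hd_def
  set d' : ℝ := F1' y₀ - F0 y₀ with hd'_def
  have hd : d ≠ 0 := sub_ne_zero.mpr (Ne.symm hy₀)
  have hkey_univ : a * d = a' * d' := by
    have := key Set.univ MeasurableSet.univ y₀
    simpa [ha_def, ha'_def, hd_def, hd'_def] using this
  have ha' : a' ≠ 0 := by
    intro h
    rw [h, zero_mul] at hkey_univ
    exact (mul_ne_zero (ne_of_gt ha) hd) hkey_univ
  have hd' : d' ≠ 0 := by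
    intro h
    rw [h, mul_zero] at hkey_univ
    exact (mul_ne_zero (ne_of_gt ha) hd) hkey_univ
  refine ⟨1 - a / a', ?_, ?_, ?_⟩
  · intro h
    have : a / a' = 0 := by linarith [h]
    rcases div_eq_zero_iff.mp this with h1 | h1
    · exact (ne_of_gt ha) h1
    · exact ha' h1
  · -- a.e. identity for π'
    have hae : π' =ᵐ[m] fun x => (a' / a) * π x := by
      refine ae_eq_of_forall_setIntegral_eq_of_sigmaFinite
        (fun s hs _ => hintπ'.integrableOn) (fun s hs _ => (hintπ.const_mul _).integrableOn)
        (fun s hs _ => ?_)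
      have h1 := key s hs y₀
      rw [← hd_def, ← hd'_def] at h1
      have h2 : d / d' = a' / a := by
        rw [div_eq_div_iff hd' (ne_of_gt ha)]
        linear_combination hkey_univ
      have h3 : (∫ x in s, π' x ∂m) = (∫ x in s, π x ∂m) * (d / d') :=
        calc (∫ x in s, π' x ∂m) = (∫ x in s, π' x ∂m) * d' / d' := by
              rw [mul_div_cancel_right₀ _ hd']
          _ = (∫ x in s, π x ∂m) * d / d' := by rw [← h1]
          _ = (∫ x in s, π x ∂m) * (d / d') := by rw [mul_div_assoc]
      rw [integral_const_mul, h3, h2]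
      ring
    filter_upwards [hae] with x hx
    rw [hx]
    rw [show (1:ℝ) - (1 - a / a') = a / a' from by ring,
      div_div_eq_mul_div]
    rw [eq_div_iff (ne_of_gt ha)]
    field_simp
  · intro y
    have h := key Set.univ MeasurableSet.univ y
    rw [setIntegral_univ, setIntegral_univ, ← ha_def, ← ha'_def] at h
    have h4 : F1' y - F0 y = (a / a') * (F1 y - F0 y) := by
      rw [div_mul_eq_mul_div, eq_div_iff ha']
      linear_combination -h
    linear_combination h4

end
end

section
/- Let 𝒳 be a subinterval of ℝ with probability measure m, let F₀ be the Uniform(0,1) distribution function, let F₁* ∈ ℱ_↓, and let π* : 𝒳 → [0,1] be nondecreasing with π*(x) ≤ δ for m-almost every x, for some δ < 1. For every c ∈ (0, 1 − δ], setting π'(x) := π*(x)/(1 − c) and F₁'(y) := c F₀(y) + (1 − c) F₁*(y), one has that π' is nondecreasing with values in [0,1], F₁' ∈ ℱ_↓, and P_{π',F₁'} = P_{π*,F₁*}. Hence the model with Π the class of nondecreasing functions from 𝒳 into [0,1] and ℱ = ℱ_↓ is not identifiable at (π*, F₁*). -/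
open MeasureTheory ProbabilityTheory

noncomputable section

/-- `F` belongs to the class `ℱ_↓` of distribution functions having a nonincreasing
density on `[0,1]` (and vanishing outside `[0,1]`). -/
def IsDecDensityDF (F : ℝ → ℝ) : Prop :=
  ∃ f : ℝ → ℝ, (∀ x, 0 ≤ f x) ∧ AntitoneOn f (Set.Icc 0 1) ∧
    (∀ x, x ∉ Set.Icc (0:ℝ) 1 → f x = 0) ∧ (∫ t, f t = 1) ∧
    ∀ y : ℝ, F y = ∫ t in Set.Iic y, f t

/-- The `Uniform(0,1)` distribution function. -/
def unifDF (y : ℝ) : ℝ := max 0 (min y 1)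

/-- non-identifiability of the covariate model with nondecreasing mixing
function class and `ℱ = ℱ_↓`.  If `π* : 𝒳 → [0,1]` is nondecreasing with `π* ≤ δ < 1`
`m`-a.e., `F₀ = Uniform(0,1)`, `F₁* ∈ ℱ_↓`, then for any `c ∈ (0, 1-δ]` the pair
`(π*/(1-c), cF₀ + (1-c)F₁*)` again lies in the model class and yields the same joint
distribution. -/
theorem stmt_3 (𝒳 : Set ℝ) (h𝒳 : 𝒳.OrdConnected) (m : Measure ℝ)
    (hm : IsProbabilityMeasure m) (hm𝒳 : m 𝒳 = 1)
    (F1star : ℝ → ℝ) (hF1 : IsDecDensityDF F1star)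
    (πstar : ℝ → ℝ) (hmono : MonotoneOn πstar 𝒳)
    (h01 : ∀ x ∈ 𝒳, πstar x ∈ Set.Icc (0:ℝ) 1)
    (δ : ℝ) (hδ : δ < 1) (hδae : ∀ᵐ x ∂m, πstar x ≤ δ)
    (c : ℝ) (hc : c ∈ Set.Ioc (0:ℝ) (1 - δ)) :
    MonotoneOn (fun x => πstar x / (1 - c)) 𝒳 ∧
    (∀ᵐ x ∂m, πstar x / (1 - c) ∈ Set.Icc (0:ℝ) 1) ∧
    IsDecDensityDF (fun y => c * unifDF y + (1 - c) * F1star y) ∧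
    JointEq m unifDF πstar F1star
      (fun x => πstar x / (1 - c)) (fun y => c * unifDF y + (1 - c) * F1star y) := by
  obtain ⟨hc0, hc1δ⟩ := hc
  obtain ⟨f, hf0, hfa, hfz, hfi, hfF⟩ := hF1
  have hmne : m ≠ 0 := hm.ne_zero
  haveI : Filter.NeBot (ae m) := ae_neBot.2 hmne
  have h𝒳meas : MeasurableSet 𝒳 := h𝒳.measurableSet
  have hae𝒳 : ∀ᵐ x ∂m, x ∈ 𝒳 := by
    have hcompl : m 𝒳ᶜ = 0 := by
      rw [prob_compl_eq_one_sub h𝒳meas, hm𝒳]; simp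
    rw [ae_iff]
    exact hcompl
  have hδ0 : 0 ≤ δ := by
    obtain ⟨x, hx1, hx2⟩ := (hδae.and hae𝒳).exists
    exact le_trans (h01 x hx2).1 hx1
  have hδc : δ ≤ 1 - c := by linarith
  have h1c : 0 ≤ 1 - c := le_trans hδ0 hδc
  have hfint : Integrable f := by
    by_contra h
    rw [integral_undef h] at hfi
    norm_num at hfi
  have hindint : Integrable ((Set.Icc (0:ℝ) 1).indicator (1 : ℝ → ℝ)) := by
    rw [integrable_indicator_iff measurableSet_Icc]
    exact integrableOn_const (by simp)
  refine ⟨?_, ?_, ?_, ?_⟩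
  · intro a ha b hb hab
    simp only [div_eq_mul_inv]
    exact mul_le_mul_of_nonneg_right (hmono ha hb hab) (inv_nonneg.2 h1c)
  · filter_upwards [hδae, hae𝒳] with x hx hx𝒳
    rcases eq_or_lt_of_le h1c with h | h
    · rw [← h, div_zero]; exact ⟨le_refl 0, zero_le_one⟩
    · constructor
      · exact div_nonneg (h01 x hx𝒳).1 h1c
      · rw [div_le_one h]; linarith
  · refine ⟨fun t => c * (Set.Icc (0:ℝ) 1).indicator 1 t + (1 - c) * f t, ?_, ?_, ?_, ?_, ?_⟩
    · intro t
      exact add_nonneg (mul_nonneg hc0.le (Set.indicator_nonneg (fun _ _ => zero_le_one) t))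
        (mul_nonneg h1c (hf0 t))
    · intro x hx y hy hxy
      simp only [Set.indicator_of_mem hx, Set.indicator_of_mem hy, Pi.one_apply]
      exact add_le_add_right (mul_le_mul_of_nonneg_left (hfa hx hy hxy) h1c) _
    · intro x hx
      simp [Set.indicator_of_notMem hx, hfz x hx]
    · rw [integral_add (hindint.const_mul c) (hfint.const_mul (1 - c)),
        integral_const_mul, integral_const_mul, hfi,
        integral_indicator measurableSet_Icc]
      simp [Real.volume_Icc]
    · intro y
      have hunif : unifDF y = ∫ t in Set.Iic y, (Set.Icc (0:ℝ) 1).indicator 1 t := by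
        rw [setIntegral_indicator measurableSet_Icc]
        have hset : Set.Iic y ∩ Set.Icc 0 1 = Set.Icc 0 (min y 1) := by
          ext t
          simp only [Set.mem_inter_iff, Set.mem_Iic, Set.mem_Icc, le_min_iff]
          tauto
        rw [hset]
        simp only [Pi.one_apply, integral_const, smul_eq_mul, mul_one, measureReal_def,
          Measure.restrict_apply_univ, Real.volume_Icc, sub_zero]
        rcases le_or_gt 0 (min y 1) with h | h
        · rw [ENNReal.toReal_ofReal h, unifDF, max_eq_right h]
        · rw [ENNReal.ofReal_of_nonpos h.le, unifDF, max_eq_left h.le]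
          simp
      show c * unifDF y + (1 - c) * F1star y
          = ∫ t in Set.Iic y, (c * (Set.Icc (0:ℝ) 1).indicator 1 t + (1 - c) * f t)
      rw [hfF y, hunif,
        integral_add ((hindint.integrableOn).const_mul c) ((hfint.integrableOn).const_mul (1 - c)),
        integral_const_mul, integral_const_mul]
  · intro A hA y
    rcases eq_or_lt_of_le h1c with h | h
    · apply setIntegral_congr_ae hA
      have hπ0 : ∀ᵐ x ∂m, πstar x = 0 := by
        filter_upwards [hδae, hae𝒳] with x hx hx𝒳
        have h1 := (h01 x hx𝒳).1
        linarith
      filter_upwards [hπ0] with x hx _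
      simp [hx, zero_div]
    · apply integral_congr_ae
      apply Filter.Eventually.of_forall
      intro x
      have hne : (1 : ℝ) - c ≠ 0 := h.ne'
      field_simp
      ring

end
end

section
/- Consider the covariate-dependent two-groups model on 𝒳 ⊆ ℝ^p with covariate distribution m, with Π the logistic class {x ↦ (1 + exp(−β₀ − βᵀx))⁻¹ : β₀ ∈ ℝ, β ∈ ℝ^p} and ℱ equal to either ℱ_Gauss or ℱ_↓. Suppose 𝒳 contains a non-empty open subset 𝒳' of ℝ^p such that m assigns strictly positive probability to every open ball contained in 𝒳'. Suppose F₀ ≠ F₁*, F₁* ∈ ℱ, and π*(x) = (1 + exp(−β₀* − (β*)ᵀx))⁻¹ with β* ≠ 0. Then P_{(π*, F₁*)} is identifiable: if P_{(π*,F₁*)} = P_{(π,F₁)} for some π ∈ Π and F₁ ∈ ℱ, then π(x) = π*(x) for m-almost every x and F₁ = F₁*. -/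
open MeasureTheory ProbabilityTheory

noncomputable section

/-- The standard normal distribution function `Φ`. -/
def stdNormalCDF (y : ℝ) : ℝ := ((gaussianReal 0 1) (Set.Iic y)).toReal

/-- `F` belongs to the class `ℱ_Gauss` of Gaussian location mixtures:
`F(y) = ∫ Φ(y - u) dG(u)` for some probability measure `G` on `ℝ`. -/
def IsGaussMixCDF (F : ℝ → ℝ) : Prop :=
  ∃ G : Measure ℝ, IsProbabilityMeasure G ∧ ∀ y : ℝ, F y = ∫ u, stdNormalCDF (y - u) ∂G

lemma logistic_pos (t : ℝ) : 0 < (1 + Real.exp (-t))⁻¹ := by positivity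

lemma logistic_cont {p : ℕ} (b0 : ℝ) (b : EuclideanSpace ℝ (Fin p)) :
    Continuous (fun x : EuclideanSpace ℝ (Fin p) =>
      (1 + Real.exp (-(b0 + ∑ i, b i * x i)))⁻¹) := by
  fun_prop (disch := intros; positivity)

lemma logistic_cross (a b l : ℝ)
    (h : (1 + Real.exp a)⁻¹ = l * (1 + Real.exp b)⁻¹) :
    1 + Real.exp b = l * (1 + Real.exp a) := by
  have d1 : (0:ℝ) < 1 + Real.exp a := by positivity
  have d2 : (0:ℝ) < 1 + Real.exp b := by positivity
  field_simp at h
  linarith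

lemma logistic_le_one (t : ℝ) : (1 + Real.exp (-t))⁻¹ ≤ 1 := by
  have h : (1:ℝ) ≤ 1 + Real.exp (-t) := by nlinarith [Real.exp_pos (-t)]
  exact inv_le_one_of_one_le₀ h

set_option maxHeartbeats 1000000 in
/-- Lemma `ide`, logistic case: in the covariate model with logistic
mixing class and `ℱ = ℱ_Gauss` or `ℱ_↓`, if `m` charges every open ball contained in a
nonempty open set `𝒳'`, `F₀ ≠ F₁*` and `β* ≠ 0`, then `P_{(π*,F₁*)}` is identifiable. -/
theorem stmt_4 {p : ℕ} (m : Measure (EuclideanSpace ℝ (Fin p)))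
    (hm : IsProbabilityMeasure m)
    (𝒳' : Set (EuclideanSpace ℝ (Fin p))) (h𝒳ne : 𝒳'.Nonempty) (h𝒳open : IsOpen 𝒳')
    (hmball : ∀ (z : EuclideanSpace ℝ (Fin p)) (r : ℝ), 0 < r →
      Metric.ball z r ⊆ 𝒳' → 0 < m (Metric.ball z r))
    (F0 F1star F1 : ℝ → ℝ)
    (hclass : (IsGaussMixCDF F1star ∧ IsGaussMixCDF F1) ∨
      (IsDecDensityDF F1star ∧ IsDecDensityDF F1))
    (hne : F0 ≠ F1star)
    (β₀star : ℝ) (βstar : EuclideanSpace ℝ (Fin p)) (hβstar : βstar ≠ 0)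
    (πstar : EuclideanSpace ℝ (Fin p) → ℝ)
    (hπstar : ∀ x, πstar x = (1 + Real.exp (-(β₀star + ∑ i, βstar i * x i)))⁻¹)
    (β₀ : ℝ) (β : EuclideanSpace ℝ (Fin p))
    (π : EuclideanSpace ℝ (Fin p) → ℝ)
    (hπ : ∀ x, π x = (1 + Real.exp (-(β₀ + ∑ i, β i * x i)))⁻¹)
    (heq : JointEq m F0 πstar F1star π F1) :
    (∀ᵐ x ∂m, π x = πstar x) ∧ F1 = F1star := by
  classical
  have hπstar' : πstar = fun x => (1 + Real.exp (-(β₀star + ∑ i, βstar i * x i)))⁻¹ :=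
    funext hπstar
  have hπ' : π = fun x => (1 + Real.exp (-(β₀ + ∑ i, β i * x i)))⁻¹ := funext hπ
  have hcs : Continuous πstar := by rw [hπstar']; exact logistic_cont _ _
  have hc : Continuous π := by rw [hπ']; exact logistic_cont _ _
  have hspos : ∀ x, 0 < πstar x := fun x => by rw [hπstar x]; exact logistic_pos _
  have hppos : ∀ x, 0 < π x := fun x => by rw [hπ x]; exact logistic_pos _
  have hsle : ∀ x, πstar x ≤ 1 := fun x => by rw [hπstar x]; exact logistic_le_one _
  have hple : ∀ x, π x ≤ 1 := fun x => by rw [hπ x]; exact logistic_le_one _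
  -- integrability of bounded measurable functions
  have hint : ∀ (g : EuclideanSpace ℝ (Fin p) → ℝ), Continuous g → (∀ x, 0 < g x) →
      (∀ x, g x ≤ 1) → ∀ (c d : ℝ), Integrable (fun x => g x * c + d) m := by
    intro g hg hg0 hg1 c d
    have hgi : Integrable g m := by
      refine Integrable.mono' (integrable_const 1) hg.aestronglyMeasurable ?_
      exact ae_of_all _ fun x => by
        rw [Real.norm_eq_abs, abs_of_pos (hg0 x)]; exact hg1 x
    exact (hgi.mul_const c).add (integrable_const d)
  -- a.e. equality of densities for each y
  have key : ∀ y : ℝ, ∀ᵐ x ∂m, πstar x * (F1star y - F0 y) = π x * (F1 y - F0 y) := by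
    intro y
    have hf : Integrable (fun x => πstar x * (F1star y - F0 y) + F0 y) m :=
      hint _ hcs hspos hsle _ _
    have hg : Integrable (fun x => π x * (F1 y - F0 y) + F0 y) m :=
      hint _ hc hppos hple _ _
    have hae : (fun x => πstar x * (F1star y - F0 y) + F0 y)
        =ᵐ[m] (fun x => π x * (F1 y - F0 y) + F0 y) := by
      refine ae_eq_of_forall_setIntegral_eq_of_sigmaFinite
        (fun s hs _ => hf.integrableOn) (fun s hs _ => hg.integrableOn) ?_
      intro s hs _
      have h1 : ∀ x, πstar x * (F1star y - F0 y) + F0 y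
          = πstar x * F1star y + (1 - πstar x) * F0 y := fun x => by ring
      have h2 : ∀ x, π x * (F1 y - F0 y) + F0 y
          = π x * F1 y + (1 - π x) * F0 y := fun x => by ring
      simp only [h1, h2]
      exact heq s hs y
    filter_upwards [hae] with x hx
    have hx' : πstar x * (F1star y - F0 y) + F0 y = π x * (F1 y - F0 y) + F0 y := hx
    linarith
  -- pointwise equality on 𝒳' by continuity
  have ptw : ∀ y : ℝ, ∀ x ∈ 𝒳', πstar x * (F1star y - F0 y) = π x * (F1 y - F0 y) := by
    intro y x hx
    by_contra hxe
    set h : EuclideanSpace ℝ (Fin p) → ℝ :=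
      fun z => πstar z * (F1star y - F0 y) - π z * (F1 y - F0 y) with hh
    have hhc : Continuous h := ((hcs.mul continuous_const).sub (hc.mul continuous_const))
    have hUopen : IsOpen (h ⁻¹' {(0:ℝ)}ᶜ ∩ 𝒳') :=
      (isOpen_compl_singleton.preimage hhc).inter h𝒳open
    have hxU : x ∈ h ⁻¹' {(0:ℝ)}ᶜ ∩ 𝒳' := by
      refine ⟨?_, hx⟩
      simp only [Set.mem_preimage, Set.mem_compl_iff, Set.mem_singleton_iff, hh]
      intro h0
      exact hxe (by linarith)
    obtain ⟨r, hr, hball⟩ := Metric.isOpen_iff.mp hUopen x hxU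
    have hpos : 0 < m (Metric.ball x r) :=
      hmball x r hr (hball.trans Set.inter_subset_right)
    have hzero : m {z | ¬ (πstar z * (F1star y - F0 y) = π z * (F1 y - F0 y))} = 0 :=
      (key y)
    have hsub : Metric.ball x r ⊆
        {z | ¬ (πstar z * (F1star y - F0 y) = π z * (F1 y - F0 y))} := by
      intro z hz
      have hz' := (hball hz).1
      simp only [Set.mem_preimage, Set.mem_compl_iff, Set.mem_singleton_iff, hh] at hz'
      intro h0
      exact hz' (by linarith)
    have := measure_mono_null hsub hzero
    exact absurd this hpos.ne'
  -- pick y0 where F0 ≠ F1star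
  obtain ⟨y0, hy0⟩ := Function.ne_iff.mp hne
  obtain ⟨x0, hx0⟩ := h𝒳ne
  obtain ⟨r, hr, hball⟩ := Metric.isOpen_iff.mp h𝒳open x0 hx0
  have hcstar : F1star y0 - F0 y0 ≠ 0 := fun h0 => hy0 (by linarith)
  have hcne : F1 y0 - F0 y0 ≠ 0 := by
    intro h0
    have := ptw y0 x0 hx0
    rw [h0, mul_zero] at this
    exact hcstar ((mul_eq_zero.mp this).resolve_left (hspos x0).ne')
  set lam : ℝ := (F1star y0 - F0 y0) / (F1 y0 - F0 y0) with hlamdef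
  have hlam : ∀ x ∈ 𝒳', π x = lam * πstar x := by
    intro x hx
    have h1 := ptw y0 x hx
    rw [hlamdef]
    field_simp
    linarith [h1]
  have hlampos : 0 < lam := by
    have := hlam x0 hx0
    have h1 := hppos x0
    have h2 := hspos x0
    nlinarith
  -- set up three points along βstar
  have hnrm : 0 < ‖βstar‖ := norm_pos_iff.mpr hβstar
  set δ : ℝ := r / (4 * ‖βstar‖) with hδdef
  have hδ : 0 < δ := by positivity
  have hmem : ∀ c : ℝ, 0 ≤ c → c ≤ 2 * δ → x0 + c • βstar ∈ 𝒳' := by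
    intro c hc0 hc2
    apply hball
    rw [Metric.mem_ball, dist_eq_norm, add_sub_cancel_left, norm_smul,
      Real.norm_eq_abs, abs_of_nonneg hc0]
    have : c * ‖βstar‖ ≤ 2 * δ * ‖βstar‖ := by nlinarith
    have h2 : 2 * δ * ‖βstar‖ = r / 2 := by
      rw [hδdef]; field_simp; ring
    nlinarith
  have hsum : ∀ (γ : EuclideanSpace ℝ (Fin p)) (c : ℝ),
      (∑ i, γ i * (x0 + c • βstar) i)
        = (∑ i, γ i * x0 i) + c * (∑ i, γ i * βstar i) := by
    intro γ c
    rw [Finset.mul_sum, ← Finset.sum_add_distrib]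
    refine Finset.sum_congr rfl fun i _ => ?_
    simp only [PiLp.add_apply, PiLp.smul_apply, smul_eq_mul]
    ring
  set S : ℝ := ∑ i, βstar i * βstar i with hSdef
  have hSpos : 0 < S := by
    have : ∃ i, βstar i ≠ 0 := by
      by_contra hcon
      push_neg at hcon
      exact hβstar (by ext i; simpa using hcon i)
    obtain ⟨i, hi⟩ := this
    have h1 : βstar i * βstar i ≤ S := by
      rw [hSdef]
      exact Finset.single_le_sum (fun j _ => mul_self_nonneg (βstar j)) (Finset.mem_univ i)
    nlinarith [mul_self_pos.mpr hi]
  set T : ℝ := ∑ i, β i * βstar i with hTdef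
  set A : ℝ := β₀ + ∑ i, β i * x0 i with hAdef
  set As : ℝ := β₀star + ∑ i, βstar i * x0 i with hAsdef
  -- the cross-multiplied equation at a point of 𝒳'
  have hEq : ∀ x ∈ 𝒳',
      1 + Real.exp (-(β₀star + ∑ i, βstar i * x i))
        = lam * (1 + Real.exp (-(β₀ + ∑ i, β i * x i))) := by
    intro x hx
    have h1 := hlam x hx
    rw [hπ x, hπstar x] at h1
    exact logistic_cross _ _ _ h1
  set P : ℝ := Real.exp (-A) with hPdef
  set Q : ℝ := Real.exp (-As) with hQdef
  set u : ℝ := Real.exp (-(δ * T)) with hudef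
  set v : ℝ := Real.exp (-(δ * S)) with hvdef
  have hE : ∀ c : ℝ, 0 ≤ c → c ≤ 2 * δ →
      1 + Q * Real.exp (-(c * S)) = lam * (1 + P * Real.exp (-(c * T))) := by
    intro c hc0 hc2
    have := hEq (x0 + c • βstar) (hmem c hc0 hc2)
    rw [hsum βstar c, hsum β c] at this
    have e1 : -(β₀star + ((∑ i, βstar i * x0 i) + c * S)) = -As + -(c * S) := by
      rw [hAsdef]; ring
    have e2 : -(β₀ + ((∑ i, β i * x0 i) + c * T)) = -A + -(c * T) := by
      rw [hAdef]; ring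
    rw [← hSdef, ← hTdef] at this
    rw [e1, e2, Real.exp_add, Real.exp_add] at this
    rw [← hPdef, ← hQdef] at this
    exact this
  have E0 : 1 + Q = lam * (1 + P) := by
    have := hE 0 le_rfl (by linarith)
    simpa using this
  have E1 : 1 + Q * v = lam * (1 + P * u) := by
    have := hE δ hδ.le (by linarith)
    rwa [← hvdef, ← hudef] at this
  have E2 : 1 + Q * (v * v) = lam * (1 + P * (u * u)) := by
    have := hE (2 * δ) (by linarith) le_rfl
    have ev : Real.exp (-(2 * δ * S)) = v * v := by
      rw [hvdef, ← Real.exp_add]; congr 1; ring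
    have eu : Real.exp (-(2 * δ * T)) = u * u := by
      rw [hudef, ← Real.exp_add]; congr 1; ring
    rwa [ev, eu] at this
  have hQpos : 0 < Q := Real.exp_pos _
  have hPpos : 0 < P := Real.exp_pos _
  have hvlt : v < 1 := by
    rw [hvdef]
    apply Real.exp_lt_one_iff.mpr
    nlinarith
  -- derive lam = 1
  have h1 : Q * (v - 1) = lam * P * (u - 1) := by linear_combination E1 - E0
  have h2 : Q * v * (v - 1) = lam * P * u * (u - 1) := by linear_combination E2 - E1
  have h3 : Q * (v - 1) * (u - v) = 0 := by linear_combination u * h1 - h2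
  have huv : u = v := by
    rcases mul_eq_zero.mp h3 with h | h
    · rcases mul_eq_zero.mp h with h' | h'
      · exact absurd h' hQpos.ne'
      · exact absurd h' (by linarith : v - 1 ≠ 0)
    · linarith [h]
  have hQP : Q = lam * P := by
    rw [huv] at h1
    have hvne : v - 1 ≠ 0 := by linarith
    exact mul_right_cancel₀ hvne h1
  have hlam1 : lam = 1 := by
    rw [hQP] at E0
    nlinarith [hPpos]
  -- conclude
  have hx0eq : π x0 = πstar x0 := by rw [hlam x0 hx0, hlam1, one_mul]
  have hF1 : F1 = F1star := by
    funext y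
    have h1 := ptw y x0 hx0
    rw [hx0eq] at h1
    have h2 := mul_left_cancel₀ (hspos x0).ne' h1
    linarith
  refine ⟨?_, hF1⟩
  filter_upwards [key y0] with x hx
  rw [hF1] at hx
  exact (mul_right_cancel₀ hcstar hx).symm

end
end

section
/- Consider the covariate-dependent two-groups model on 𝒳 ⊆ ℝ^p with covariate distribution m, with Π the probit class {x ↦ Φ(β₀ + βᵀx) : β₀ ∈ ℝ, β ∈ ℝ^p} (Φ the standard normal distribution function) and ℱ equal to either ℱ_Gauss or ℱ_↓. Suppose 𝒳 contains a non-empty open subset 𝒳' of ℝ^p such that m assigns strictly positive probability to every open ball contained in 𝒳'. Suppose F₀ ≠ F₁*, F₁* ∈ ℱ, and π*(x) = Φ(β₀* + (β*)ᵀx) with β* ≠ 0. Then P_{(π*, F₁*)} is identifiable: if P_{(π*,F₁*)} = P_{(π,F₁)} with π ∈ Π and F₁ ∈ ℱ, then π = π* m-almost everywhere and F₁ = F₁*. -/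
open MeasureTheory ProbabilityTheory

noncomputable section

set_option linter.unusedVariables false in
lemma stdNormalCDF_eq (y : ℝ) :
    stdNormalCDF y = ∫ x in Set.Iic y, gaussianPDFReal 0 1 x := by
  rw [stdNormalCDF, gaussianReal_apply_eq_integral 0 one_ne_zero,
    ENNReal.toReal_ofReal (integral_nonneg fun x => gaussianPDFReal_nonneg 0 1 x)]

lemma gaussianPDFReal_cont : Continuous (gaussianPDFReal 0 1) := by
  rw [gaussianPDFReal_def]; fun_prop

lemma stdNormalCDF_hasDerivAt (y : ℝ) :
    HasDerivAt stdNormalCDF (gaussianPDFReal 0 1 y) y := by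
  have hint : Integrable (gaussianPDFReal 0 1) := integrable_gaussianPDFReal 0 1
  have h : ∀ z : ℝ, stdNormalCDF z
      = stdNormalCDF 0 + ∫ t in (0:ℝ)..z, gaussianPDFReal 0 1 t := by
    intro z
    rw [stdNormalCDF_eq, stdNormalCDF_eq,
      ← intervalIntegral.integral_Iic_sub_Iic hint.integrableOn hint.integrableOn]
    ring
  have hd : HasDerivAt (fun z => stdNormalCDF 0 + ∫ t in (0:ℝ)..z, gaussianPDFReal 0 1 t)
      (gaussianPDFReal 0 1 y) y :=
    (intervalIntegral.integral_hasDerivAt_right (hint.intervalIntegrable)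
      (hint.aestronglyMeasurable.stronglyMeasurableAtFilter)
      gaussianPDFReal_cont.continuousAt).const_add _
  exact hd.congr_of_eventuallyEq (Filter.Eventually.of_forall fun z => h z)

lemma stdNormalCDF_pos (y : ℝ) : 0 < stdNormalCDF y := by
  have hint : Integrable (gaussianPDFReal 0 1) := integrable_gaussianPDFReal 0 1
  have h : stdNormalCDF y - stdNormalCDF (y - 1)
      = ∫ t in (y-1)..y, gaussianPDFReal 0 1 t := by
    rw [stdNormalCDF_eq, stdNormalCDF_eq,
      intervalIntegral.integral_Iic_sub_Iic hint.integrableOn hint.integrableOn]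
  have hpos : 0 < ∫ t in (y-1)..y, gaussianPDFReal 0 1 t :=
    intervalIntegral.intervalIntegral_pos_of_pos_on hint.intervalIntegrable
      (fun x _ => gaussianPDFReal_pos 0 1 x one_ne_zero) (by linarith)
  have h0 : 0 ≤ stdNormalCDF (y - 1) := ENNReal.toReal_nonneg
  linarith

lemma stdNormalCDF_le_one (y : ℝ) : stdNormalCDF y ≤ 1 := by
  rw [stdNormalCDF]
  exact ENNReal.toReal_le_of_le_ofReal zero_le_one (by simpa using prob_le_one)

lemma stdNormalCDF_continuous : Continuous stdNormalCDF :=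
  continuous_iff_continuousAt.mpr fun y => (stdNormalCDF_hasDerivAt y).continuousAt

/-- Lemma `ide`, probit case: in the covariate model with probit
mixing class and `ℱ = ℱ_Gauss` or `ℱ_↓`, if `m` charges every open ball contained in a
nonempty open set `𝒳'`, `F₀ ≠ F₁*` and `β* ≠ 0`, then `P_{(π*,F₁*)}` is identifiable. -/
theorem stmt_5 {p : ℕ} (m : Measure (EuclideanSpace ℝ (Fin p)))
    (hm : IsProbabilityMeasure m)
    (𝒳' : Set (EuclideanSpace ℝ (Fin p))) (h𝒳ne : 𝒳'.Nonempty) (h𝒳open : IsOpen 𝒳')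
    (hmball : ∀ (z : EuclideanSpace ℝ (Fin p)) (r : ℝ), 0 < r →
      Metric.ball z r ⊆ 𝒳' → 0 < m (Metric.ball z r))
    (F0 F1star F1 : ℝ → ℝ)
    (hclass : (IsGaussMixCDF F1star ∧ IsGaussMixCDF F1) ∨
      (IsDecDensityDF F1star ∧ IsDecDensityDF F1))
    (hne : F0 ≠ F1star)
    (β₀star : ℝ) (βstar : EuclideanSpace ℝ (Fin p)) (hβstar : βstar ≠ 0)
    (πstar : EuclideanSpace ℝ (Fin p) → ℝ)
    (hπstar : ∀ x, πstar x = stdNormalCDF (β₀star + ∑ i, βstar i * x i))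
    (β₀ : ℝ) (β : EuclideanSpace ℝ (Fin p))
    (π : EuclideanSpace ℝ (Fin p) → ℝ)
    (hπ : ∀ x, π x = stdNormalCDF (β₀ + ∑ i, β i * x i))
    (heq : JointEq m F0 πstar F1star π F1) :
    (∀ᵐ x ∂m, π x = πstar x) ∧ F1 = F1star := by
  clear hclass
  have hΦpos := stdNormalCDF_pos
  have hπstar_cont : Continuous πstar := by
    have h : πstar = fun x => stdNormalCDF (β₀star + ∑ i, βstar i * x i) := funext hπstar
    rw [h]; exact stdNormalCDF_continuous.comp (by fun_prop)
  have hπ_cont : Continuous π := by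
    have h : π = fun x => stdNormalCDF (β₀ + ∑ i, β i * x i) := funext hπ
    rw [h]; exact stdNormalCDF_continuous.comp (by fun_prop)
  -- integrability
  have hb : ∀ (g : EuclideanSpace ℝ (Fin p) → ℝ) (F : ℝ → ℝ), (∀ x, 0 < g x) →
      (∀ x, g x ≤ 1) → Continuous g → ∀ y : ℝ,
      Integrable (fun x => g x * F y + (1 - g x) * F0 y) m := by
    intro g F hg0 hg1 hgc y
    refine (integrable_const (|F y| + |F0 y|)).mono'
      ((hgc.mul continuous_const).add
        ((continuous_const.sub hgc).mul continuous_const)).aestronglyMeasurable ?_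
    filter_upwards with x
    have h0 := (hg0 x).le
    have h1 := hg1 x
    rw [Real.norm_eq_abs]
    have ha : |g x| ≤ 1 := by rw [abs_of_nonneg h0]; exact h1
    have hb' : |1 - g x| ≤ 1 := by rw [abs_of_nonneg (by linarith)]; linarith
    calc |g x * F y + (1 - g x) * F0 y|
        ≤ |g x * F y| + |(1 - g x) * F0 y| := abs_add_le _ _
      _ ≤ |F y| + |F0 y| := by
          rw [abs_mul, abs_mul]
          have h2 : |g x| * |F y| ≤ 1 * |F y| :=
            mul_le_mul_of_nonneg_right ha (abs_nonneg _)
          have h3 : |1 - g x| * |F0 y| ≤ 1 * |F0 y| :=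
            mul_le_mul_of_nonneg_right hb' (abs_nonneg _)
          linarith
  -- key pointwise identity
  have key : ∀ y : ℝ, ∀ᵐ x ∂m, πstar x * (F1star y - F0 y) = π x * (F1 y - F0 y) := by
    intro y
    have h1 := hb πstar F1star (fun x => hπstar x ▸ hΦpos _)
      (fun x => hπstar x ▸ stdNormalCDF_le_one _) hπstar_cont y
    have h2 := hb π F1 (fun x => hπ x ▸ hΦpos _)
      (fun x => hπ x ▸ stdNormalCDF_le_one _) hπ_cont y
    have hae := Integrable.ae_eq_of_forall_setIntegral_eq _ _ h1 h2
      (fun s hs _ => heq s hs y)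
    filter_upwards [hae] with x hx
    have hx' : πstar x * F1star y + (1 - πstar x) * F0 y
        = π x * F1 y + (1 - π x) * F0 y := hx
    linear_combination hx'
  obtain ⟨y₀, hy₀⟩ := Function.ne_iff.mp hne
  have hcstar_ne : F1star y₀ - F0 y₀ ≠ 0 := sub_ne_zero.mpr (Ne.symm hy₀)
  set l := (F1 y₀ - F0 y₀) / (F1star y₀ - F0 y₀) with hl
  clear_value l
  -- a.e. identity of continuous functions ⇒ identity on 𝒳'
  have eqOn : ∀ x ∈ 𝒳', πstar x * (F1star y₀ - F0 y₀) = π x * (F1 y₀ - F0 y₀) := by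
    intro x hx
    by_contra hne'
    have hopen : IsOpen ({x : EuclideanSpace ℝ (Fin p) |
        πstar x * (F1star y₀ - F0 y₀) ≠ π x * (F1 y₀ - F0 y₀)} ∩ 𝒳') :=
      (isOpen_ne_fun (hπstar_cont.mul continuous_const)
        (hπ_cont.mul continuous_const)).inter h𝒳open
    obtain ⟨r, hr, hball⟩ := Metric.isOpen_iff.mp hopen x ⟨hne', hx⟩
    have h1 : 0 < m (Metric.ball x r) := hmball x r hr (hball.trans Set.inter_subset_right)
    have h2 : m (Metric.ball x r) = 0 :=
      measure_mono_null (fun z hz => (hball hz).1) (ae_iff.mp (key y₀))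
    exact h1.ne' h2
  have eqOn' : ∀ x ∈ 𝒳', πstar x = l * π x := by
    intro x hx
    rw [hl, div_mul_eq_mul_div, eq_div_iff hcstar_ne]
    linear_combination eqOn x hx
  obtain ⟨z, hz⟩ := h𝒳ne
  obtain ⟨r, hr, hball⟩ := Metric.isOpen_iff.mp h𝒳open z hz
  have hπsz : 0 < πstar z := hπstar z ▸ hΦpos _
  have hπz : 0 < π z := hπ z ▸ hΦpos _
  have hl_pos : 0 < l := by nlinarith [eqOn' z hz]
  set a := β₀star + ∑ i, βstar i * z i with ha_def
  set sstar := ∑ i, βstar i * βstar i with hsstar_def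
  set b := β₀ + ∑ i, β i * z i with hb_def
  set s := ∑ i, β i * βstar i with hs_def
  have hsstar_pos : 0 < sstar := by
    obtain ⟨i, hi⟩ : ∃ i, βstar i ≠ 0 := by
      by_contra hc; push_neg at hc; exact hβstar (PiLp.ext fun i => by simp [hc i])
    exact Finset.sum_pos' (fun j _ => mul_self_nonneg _)
      ⟨i, Finset.mem_univ i, mul_self_pos.mpr hi⟩
  have hnorm : 0 < ‖βstar‖ := norm_pos_iff.mpr hβstar
  set ε := r / ‖βstar‖ with hε
  clear_value a sstar b s ε
  have hε_pos : 0 < ε := by rw [hε]; exact div_pos hr hnorm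
  have hsum : ∀ (γ : EuclideanSpace ℝ (Fin p)) (γ₀ t : ℝ),
      γ₀ + ∑ i, γ i * (z + t • βstar) i
        = (γ₀ + ∑ i, γ i * z i) + t * ∑ i, γ i * βstar i := by
    intro γ γ₀ t
    have h : ∑ i, γ i * (z + t • βstar) i
        = ∑ i, (γ i * z i + t * (γ i * βstar i)) :=
      Finset.sum_congr rfl fun i _ => by
        simp only [PiLp.add_apply, PiLp.smul_apply, smul_eq_mul]; ring
    rw [h, Finset.sum_add_distrib, ← Finset.mul_sum]; ring
  have hline : ∀ t : ℝ, |t| < ε →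
      stdNormalCDF (a + t * sstar) = l * stdNormalCDF (b + t * s) := by
    intro t ht
    have hx : z + t • βstar ∈ 𝒳' := by
      apply hball
      rw [Metric.mem_ball]
      have hd : dist (z + t • βstar) z = |t| * ‖βstar‖ := by
        simp [dist_eq_norm, norm_smul, abs_mul]
      rw [hd]
      rw [hε] at ht
      exact (lt_div_iff₀ hnorm).mp ht
    have h := eqOn' _ hx
    rw [hπstar, hπ, hsum βstar β₀star t, hsum β β₀ t,
      ← ha_def, ← hsstar_def, ← hb_def, ← hs_def] at h
    exact h
  -- derivative identity
  have haff : ∀ (u w t : ℝ), HasDerivAt (fun t => u + t * w) w t := by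
    intro u w t
    simpa using ((hasDerivAt_id t).mul_const w).const_add u
  have hEopen : ∀ t : ℝ, |t| < ε → {t' : ℝ | |t'| < ε} ∈ nhds t := by
    intro t ht
    have h : {t' : ℝ | |t'| < ε} = Set.Ioo (-ε) ε := by
      ext u; simp [abs_lt, Set.mem_Ioo]
    rw [h]
    exact isOpen_Ioo.mem_nhds (by simpa [Set.mem_Ioo] using abs_lt.mp ht)
  have hderiv : ∀ t : ℝ, |t| < ε →
      gaussianPDFReal 0 1 (a + t * sstar) * sstar
        = l * (gaussianPDFReal 0 1 (b + t * s) * s) := by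
    intro t ht
    have h1 : HasDerivAt (fun t => stdNormalCDF (a + t * sstar))
        (gaussianPDFReal 0 1 (a + t * sstar) * sstar) t :=
      (stdNormalCDF_hasDerivAt _).comp t (haff a sstar t)
    have h2 : HasDerivAt (fun t => l * stdNormalCDF (b + t * s))
        (l * (gaussianPDFReal 0 1 (b + t * s) * s)) t :=
      ((stdNormalCDF_hasDerivAt _).comp t (haff b s t)).const_mul l
    have h3 : HasDerivAt (fun t => stdNormalCDF (a + t * sstar))
        (l * (gaussianPDFReal 0 1 (b + t * s) * s)) t := by
      apply h2.congr_of_eventuallyEq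
      filter_upwards [hEopen t ht] with u hu
      exact hline u hu
    exact h1.unique h3
  have hc₀_pos : (0:ℝ) < (Real.sqrt (2 * Real.pi))⁻¹ :=
    inv_pos.mpr (Real.sqrt_pos.mpr (by positivity))
  have hpdf : ∀ y : ℝ, gaussianPDFReal 0 1 y
      = (Real.sqrt (2 * Real.pi))⁻¹ * Real.exp (-(y^2)/2) := by
    intro y; simp [gaussianPDFReal]
  have hexp : ∀ t : ℝ, |t| < ε →
      sstar * Real.exp (-((a + t*sstar)^2)/2)
        = (l * s) * Real.exp (-((b + t*s)^2)/2) := by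
    intro t ht
    have h := hderiv t ht
    rw [hpdf, hpdf] at h
    apply mul_left_cancel₀ hc₀_pos.ne'
    linear_combination h
  have h0abs : |(0:ℝ)| < ε := by simpa using hε_pos
  have hs_pos : 0 < s := by
    have h := hexp 0 h0abs
    have hE1 : 0 < Real.exp (-((a + 0*sstar)^2)/2) := Real.exp_pos _
    have hE2 : 0 < Real.exp (-((b + 0*s)^2)/2) := Real.exp_pos _
    nlinarith [mul_pos hsstar_pos hE1, mul_pos hl_pos hE2]
  have hKey : ∀ t : ℝ, |t| < ε →
      (b + t*s)^2 - (a + t*sstar)^2 = 2 * Real.log (l * s / sstar) := by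
    intro t ht
    have h := hexp t ht
    have h2 : Real.exp (-((a + t*sstar)^2)/2 - -((b + t*s)^2)/2) = l * s / sstar := by
      rw [Real.exp_sub, div_eq_div_iff (Real.exp_pos _).ne' hsstar_pos.ne']
      linear_combination h
    have h3 := congrArg Real.log h2
    rw [Real.log_exp] at h3
    linarith
  have habs1 : |(ε/2 : ℝ)| < ε := by rw [abs_of_pos (by linarith)]; linarith
  have habs2 : |(-(ε/2) : ℝ)| < ε := by rw [abs_neg, abs_of_pos (by linarith)]; linarith
  have E0 := hKey 0 h0abs
  have E1 := hKey (ε/2) habs1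
  have E2 := hKey (-(ε/2)) habs2
  have h4 : (ε/2) * (b*s - a*sstar) = 0 := by linear_combination (E1 - E2)/4
  have hbs : b * s = a * sstar := by
    rcases mul_eq_zero.mp h4 with h | h
    · linarith
    · linarith
  have h5 : (ε/2)^2 * (s^2 - sstar^2) = 0 := by linear_combination (E1 + E2 - 2*E0)/2
  have hs_sq : s^2 = sstar^2 := by
    have hε2 : ((ε/2)^2 : ℝ) ≠ 0 := ne_of_gt (pow_pos (by linarith) 2)
    have h := (mul_eq_zero.mp h5).resolve_left hε2
    linarith
  have hs_eq : s = sstar := by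
    have h6 : (s - sstar) * (s + sstar) = 0 := by linear_combination hs_sq
    rcases mul_eq_zero.mp h6 with h | h
    · linarith
    · linarith
  have hab : b = a := by
    rw [hs_eq] at hbs
    exact mul_right_cancel₀ hsstar_pos.ne' hbs
  have hlog : Real.log (l * s / sstar) = 0 := by
    rw [hab] at E0
    linear_combination (-1/2 : ℝ) * E0
  have hx1 : l * s / sstar = 1 := by
    have hpos : 0 < l * s / sstar := div_pos (mul_pos hl_pos hs_pos) hsstar_pos
    rw [← Real.exp_log hpos, hlog, Real.exp_zero]
  have hl1 : l = 1 := by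
    rw [hs_eq, div_eq_one_iff_eq hsstar_pos.ne'] at hx1
    exact mul_right_cancel₀ hsstar_pos.ne' (by linarith)
  have hcc : F1 y₀ - F0 y₀ = F1star y₀ - F0 y₀ := by
    rw [hl, div_eq_one_iff_eq hcstar_ne] at hl1
    exact hl1
  have hae_pi : ∀ᵐ x ∂m, π x = πstar x := by
    filter_upwards [key y₀] with x hx
    rw [hcc] at hx
    exact (mul_right_cancel₀ hcstar_ne hx).symm
  refine ⟨hae_pi, ?_⟩
  funext y
  haveI : (ae m).NeBot := ae_neBot.mpr (IsProbabilityMeasure.ne_zero m)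
  obtain ⟨x, hx1', hx2⟩ := ((key y).and hae_pi).exists
  rw [hx2] at hx1'
  have hpx : πstar x ≠ 0 := (hπstar x ▸ hΦpos _).ne'
  have h7 := mul_left_cancel₀ hpx hx1'
  linarith


end
end

section
/- Consider the covariate-dependent two-groups model with Π the class of functions (x₁,x₂) ↦ g(β₀ + β₁ᵀx₁ + β₂ᵀx₂) with g the logistic function t ↦ (1+e^{−t})⁻¹ or g = Φ, and ℱ equal to ℱ_Gauss or ℱ_↓. Suppose 𝒳 = 𝒳₁ × 𝒳₂ with 𝒳₁ ⊆ ℝ^{p₁}, 𝒳₂ ⊆ ℝ^{p₂}, the marginal m₁ of m on 𝒳₁ is supported on a non-empty countable set, and there exist x̃₁ ∈ 𝒳₁ with m₁({x̃₁}) > 0 and a non-empty open set 𝒳₂' ⊆ 𝒳₂ such that the conditional distribution m_{2|1}(·, x̃₁) assigns strictly positive probability to every open ball contained in 𝒳₂'. If F₀ ≠ F₁*, F₁* ∈ ℱ, and π*(x₁,x₂) = g(β₀* + (β₁*)ᵀx₁ + (β₂*)ᵀx₂) with β₂* ≠ 0, then P_{(π*, F₁*)} is identifiable. -/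
open MeasureTheory ProbabilityTheory

noncomputable section

namespace StmtAux

open Real Set

lemma deriv_zero_on {f f' : ℝ → ℝ} (hf : ∀ t, HasDerivAt f (f' t) t)
    {a b : ℝ} (h : ∀ t ∈ Ioo a b, f t = 0) :
    ∀ t ∈ Ioo a b, f' t = 0 := by
  intro t ht
  have h1 : f =ᶠ[nhds t] fun _ => (0:ℝ) := by
    filter_upwards [isOpen_Ioo.mem_nhds ht] with s hs using h s hs
  have h2 := h1.deriv_eq
  rw [(hf t).deriv] at h2
  simpa using h2

lemma hasDerivAt_affine (c d t : ℝ) : HasDerivAt (fun t : ℝ => c + d * t) d t := by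
  simpa using ((hasDerivAt_id t).const_mul d).const_add c

lemma hasDerivAt_exp_affine (c d t : ℝ) :
    HasDerivAt (fun t => Real.exp (-(c + d * t))) (-d * Real.exp (-(c + d * t))) t := by
  have h1 : HasDerivAt (fun t : ℝ => -(c + d * t)) (-d) t := (hasDerivAt_affine c d t).neg
  have h2 := h1.exp
  convert h2 using 1
  ring

lemma hasDerivAt_gauss (c d t : ℝ) :
    HasDerivAt (fun t => Real.exp (-(c + d * t) ^ 2 / 2))
      (-(c + d * t) * d * Real.exp (-(c + d * t) ^ 2 / 2)) t := by
  have h1 : HasDerivAt (fun t : ℝ => c + d * t) d t := hasDerivAt_affine c d t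
  have h2 : HasDerivAt (fun t : ℝ => -(c + d * t) ^ 2 / 2) (-(c + d * t) * d) t := by
    have h3 := ((h1.pow 2).neg).div_const 2
    refine h3.congr_deriv ?_
    push_cast
    ring
  have h4 := h2.exp
  convert h4 using 1
  ring

lemma key_logistic {u v s w lam a b : ℝ} (hlam : 0 < lam) (hw : 0 < w) (hab : a < b)
    (h : ∀ t ∈ Ioo a b,
      (1 + Real.exp (-(u + s * t)))⁻¹ = lam * (1 + Real.exp (-(v + w * t)))⁻¹) :
    lam = 1 := by
  have hA : ∀ t : ℝ, (0:ℝ) < 1 + Real.exp (-(u + s * t)) := fun t => by positivity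
  have hB : ∀ t : ℝ, (0:ℝ) < 1 + Real.exp (-(v + w * t)) := fun t => by positivity
  set f : ℝ → ℝ := fun t => (1 + Real.exp (-(v + w * t))) - lam * (1 + Real.exp (-(u + s * t)))
    with hfdef
  have hf0 : ∀ t ∈ Ioo a b, f t = 0 := by
    intro t ht
    have h1 := h t ht
    set A := Real.exp (-(u + s * t)) with hAdef
    set B := Real.exp (-(v + w * t)) with hBdef
    have h2 : (1 + B) = lam * (1 + A) := by
      field_simp [(hA t).ne', (hB t).ne'] at h1
      rw [div_eq_div_iff (hA t).ne' (hB t).ne'] at h1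
      linarith
    simp only [hfdef]
    linear_combination h2
  set f1 : ℝ → ℝ := fun t => lam * s * Real.exp (-(u + s * t)) - w * Real.exp (-(v + w * t))
    with hf1def
  have hfd : ∀ t, HasDerivAt f (f1 t) t := by
    intro t
    have h2 := ((hasDerivAt_exp_affine v w t).const_add 1).sub
      (((hasDerivAt_exp_affine u s t).const_add 1).const_mul lam)
    refine h2.congr_deriv ?_
    simp only [hf1def]; ring
  have hf10 : ∀ t ∈ Ioo a b, f1 t = 0 := deriv_zero_on hfd hf0
  set f2 : ℝ → ℝ := fun t => w * w * Real.exp (-(v + w * t)) - lam * (s * s) * Real.exp (-(u + s * t))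
    with hf2def
  have hf1d : ∀ t, HasDerivAt f1 (f2 t) t := by
    intro t
    have h2 := ((hasDerivAt_exp_affine u s t).const_mul (lam * s)).sub
      ((hasDerivAt_exp_affine v w t).const_mul w)
    refine h2.congr_deriv ?_
    simp only [hf2def]; ring
  have hf20 : ∀ t ∈ Ioo a b, f2 t = 0 := deriv_zero_on hf1d hf10
  set t₀ := (a + b) / 2 with ht₀def
  have ht₀ : t₀ ∈ Ioo a b := ⟨by simp only [ht₀def]; linarith, by simp only [ht₀def]; linarith⟩
  set E₁ := Real.exp (-(u + s * t₀)) with hE₁def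
  set E₂ := Real.exp (-(v + w * t₀)) with hE₂def
  have hE₁ : 0 < E₁ := Real.exp_pos _
  have hE₂ : 0 < E₂ := Real.exp_pos _
  have e1 : (1 + E₂) - lam * (1 + E₁) = 0 := hf0 t₀ ht₀
  have e2 : lam * s * E₁ - w * E₂ = 0 := hf10 t₀ ht₀
  have e3 : w * w * E₂ - lam * (s * s) * E₁ = 0 := hf20 t₀ ht₀
  have hA1 : lam * s * E₁ = w * E₂ := by linarith
  have hws : w * (w * E₂) = s * (w * E₂) := by
    have h5 : w * w * E₂ = lam * (s * s) * E₁ := by linarith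
    calc w * (w * E₂) = w * w * E₂ := by ring
    _ = lam * (s * s) * E₁ := h5
    _ = s * (lam * s * E₁) := by ring
    _ = s * (w * E₂) := by rw [hA1]
  have hsw : w = s := mul_right_cancel₀ (ne_of_gt (mul_pos hw hE₂)) hws
  have hE : w * (lam * E₁) = w * E₂ := by rw [hsw] at hA1 ⊢; linarith
  have hE' : lam * E₁ = E₂ := mul_left_cancel₀ (ne_of_gt hw) hE
  linarith


lemma continuous_gaussPDF : Continuous (gaussianPDFReal 0 1) := by
  rw [gaussianPDFReal_def]
  fun_prop

lemma stdNormalCDF_eq (y : ℝ) :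
    stdNormalCDF y = ∫ x in Iic y, gaussianPDFReal 0 1 x := by
  rw [stdNormalCDF, gaussianReal_apply_eq_integral 0 one_ne_zero, ENNReal.toReal_ofReal]
  exact setIntegral_nonneg measurableSet_Iic fun x _ => gaussianPDFReal_nonneg 0 1 x

lemma stdNormalCDF_sub (c y : ℝ) :
    stdNormalCDF y - stdNormalCDF c = ∫ t in c..y, gaussianPDFReal 0 1 t := by
  rw [stdNormalCDF_eq, stdNormalCDF_eq]
  exact intervalIntegral.integral_Iic_sub_Iic (integrable_gaussianPDFReal 0 1).integrableOn
    (integrable_gaussianPDFReal 0 1).integrableOn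

lemma stdNormalCDF_hasDerivAt (y : ℝ) :
    HasDerivAt stdNormalCDF (gaussianPDFReal 0 1 y) y := by
  have hfun : stdNormalCDF = fun z => stdNormalCDF 0 + ∫ t in (0:ℝ)..z, gaussianPDFReal 0 1 t := by
    funext z
    rw [← stdNormalCDF_sub 0 z]
    ring
  rw [hfun]
  exact (intervalIntegral.integral_hasDerivAt_right
    ((integrable_gaussianPDFReal 0 1).intervalIntegrable)
    (continuous_gaussPDF.stronglyMeasurable.stronglyMeasurableAtFilter)
    continuous_gaussPDF.continuousAt).const_add _

lemma stdNormalCDF_pos (y : ℝ) : 0 < stdNormalCDF y := by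
  have h1 : stdNormalCDF (y - 1) ≤ stdNormalCDF y - (∫ t in (y-1)..y, gaussianPDFReal 0 1 t) := by
    rw [← stdNormalCDF_sub (y-1) y]; ring_nf; exact le_refl _
  have h2 : 0 < ∫ t in (y-1)..y, gaussianPDFReal 0 1 t :=
    intervalIntegral.intervalIntegral_pos_of_pos ((integrable_gaussianPDFReal 0 1).intervalIntegrable)
      (fun x => gaussianPDFReal_pos 0 1 x one_ne_zero) (by linarith)
  have h3 : 0 ≤ stdNormalCDF (y - 1) := ENNReal.toReal_nonneg
  linarith

lemma stdNormalCDF_le_one (y : ℝ) : stdNormalCDF y ≤ 1 := by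
  have h := prob_le_one (μ := gaussianReal 0 1) (s := Set.Iic y)
  calc ((gaussianReal 0 1) (Set.Iic y)).toReal ≤ (1 : ENNReal).toReal :=
        ENNReal.toReal_mono (by simp) h
  _ = 1 := by simp

lemma continuous_stdNormalCDF : Continuous stdNormalCDF :=
  continuous_iff_continuousAt.mpr fun y => (stdNormalCDF_hasDerivAt y).continuousAt

lemma gaussPDF_eq (x : ℝ) :
    gaussianPDFReal 0 1 x = (Real.sqrt (2 * Real.pi))⁻¹ * Real.exp (-x ^ 2 / 2) := by
  rw [gaussianPDFReal]
  norm_num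

lemma key_probit {u v s w lam a b : ℝ} (hlam : 0 < lam) (hw : 0 < w) (hab : a < b)
    (h : ∀ t ∈ Ioo a b, stdNormalCDF (u + s * t) = lam * stdNormalCDF (v + w * t)) :
    lam = 1 := by
  set C := (Real.sqrt (2 * Real.pi))⁻¹ with hCdef
  have hCpos : 0 < C := by
    rw [hCdef]
    exact inv_pos.mpr (Real.sqrt_pos.mpr (by positivity))
  set f : ℝ → ℝ := fun t => lam * stdNormalCDF (v + w * t) - stdNormalCDF (u + s * t) with hfdef
  have hf0 : ∀ t ∈ Ioo a b, f t = 0 := by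
    intro t ht
    simp only [hfdef]
    rw [← h t ht]
    ring
  set f1 : ℝ → ℝ := fun t =>
      lam * w * (C * Real.exp (-(v + w * t) ^ 2 / 2)) - s * (C * Real.exp (-(u + s * t) ^ 2 / 2))
    with hf1def
  have hgd : ∀ (c d t : ℝ), HasDerivAt (fun t => stdNormalCDF (c + d * t))
      (d * (C * Real.exp (-(c + d * t) ^ 2 / 2))) t := by
    intro c d t
    have h1 := (stdNormalCDF_hasDerivAt (c + d * t)).comp t (hasDerivAt_affine c d t)
    rw [gaussPDF_eq] at h1
    refine h1.congr_deriv ?_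
    rw [← hCdef]
    ring
  have hfd : ∀ t, HasDerivAt f (f1 t) t := by
    intro t
    have h2 := ((hgd v w t).const_mul lam).sub (hgd u s t)
    refine h2.congr_deriv ?_
    simp only [hf1def]
    ring
  have hf10 : ∀ t ∈ Ioo a b, f1 t = 0 := deriv_zero_on hfd hf0
  set f2 : ℝ → ℝ := fun t =>
      s * (-(u + s * t) * s * Real.exp (-(u + s * t) ^ 2 / 2)) * C
        - lam * w * (-(v + w * t) * w * Real.exp (-(v + w * t) ^ 2 / 2)) * C
    with hf2def
  have hf1d : ∀ t, HasDerivAt f1 (-(f2 t)) t := by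
    intro t
    have h2 := (((hasDerivAt_gauss v w t).const_mul C).const_mul (lam * w)).sub
      (((hasDerivAt_gauss u s t).const_mul C).const_mul s)
    refine h2.congr_deriv ?_
    simp only [hf2def]
    ring
  have hf20 : ∀ t ∈ Ioo a b, f2 t = 0 := by
    intro t ht
    have := deriv_zero_on hf1d hf10 t ht
    linarith
  set t₀ := (a + b) / 2 with ht₀def
  have ht₀ : t₀ ∈ Ioo a b := ⟨by simp only [ht₀def]; linarith, by simp only [ht₀def]; linarith⟩
  have hEpos : ∀ x : ℝ, 0 < C * Real.exp (-x ^ 2 / 2) :=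
    fun x => mul_pos hCpos (Real.exp_pos _)
  -- s is positive
  have hs : 0 < s := by
    have e2 := hf10 t₀ ht₀
    simp only [hf1def] at e2
    have h1 : s * (C * Real.exp (-(u + s * t₀) ^ 2 / 2))
        = lam * w * (C * Real.exp (-(v + w * t₀) ^ 2 / 2)) := by linarith
    have h2 : 0 < lam * w * (C * Real.exp (-(v + w * t₀) ^ 2 / 2)) :=
      mul_pos (mul_pos hlam hw) (hEpos _)
    nlinarith [hEpos (u + s * t₀)]
  -- linear relation on the interval
  have hrho : ∀ t ∈ Ioo a b, s * (u + s * t) - w * (v + w * t) = 0 := by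
    intro t ht
    have e2 := hf10 t ht
    have e3 := hf20 t ht
    simp only [hf1def] at e2
    simp only [hf2def] at e3
    set P := C * Real.exp (-(u + s * t) ^ 2 / 2) with hPdef
    set Q := C * Real.exp (-(v + w * t) ^ 2 / 2) with hQdef
    have hP : 0 < P := hEpos _
    have h1 : s * P = lam * w * Q := by linarith
    have h2 : s * ((u + s * t) * s * P) = lam * w * ((v + w * t) * w * Q) := by
      simp only [hPdef, hQdef]
      nlinarith [e3]
    have h3 : s * ((u + s * t) * s * P) = s * ((v + w * t) * w * P) := by
      rw [h2]
      calc lam * w * ((v + w * t) * w * Q) = (v + w * t) * w * (lam * w * Q) := by ring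
      _ = (v + w * t) * w * (s * P) := by rw [h1]
      _ = s * ((v + w * t) * w * P) := by ring
    have h4 := mul_left_cancel₀ (ne_of_gt hs) h3
    have h5 := mul_right_cancel₀ (ne_of_gt hP) h4
    nlinarith [h5]
  set rho : ℝ → ℝ := fun t => s * (u + s * t) - w * (v + w * t) with hrhodef
  have hrhod : ∀ t, HasDerivAt rho (s * s - w * w) t := by
    intro t
    have h2 := ((hasDerivAt_affine u s t).const_mul s).sub ((hasDerivAt_affine v w t).const_mul w)
    exact h2
  have hsq : s * s - w * w = 0 := deriv_zero_on hrhod hrho t₀ ht₀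
  have hsweq : s = w := by nlinarith
  have huv : u = v := by
    have h5 := hrho t₀ ht₀
    rw [hsweq] at h5
    have : w * u = w * v := by nlinarith
    exact mul_left_cancel₀ (ne_of_gt hw) this
  have h6 := h t₀ ht₀
  rw [hsweq, huv] at h6
  have h7 := stdNormalCDF_pos (v + w * t₀)
  nlinarith [h6, h7]

end StmtAux


/-- Corollary `revide`: identifiability in the covariate model with mixed
discrete/continuous covariates.  The covariate distribution `m` on `𝒳₁ × 𝒳₂` has a countably
supported first marginal; at some atom `x̃₁` of the first marginal, the conditional
distribution `m_{2|1}(·, x̃₁)` charges every open ball contained in a nonempty open set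
`𝒳₂'`.  If `g` is the logistic or probit link, `F₀ ≠ F₁*`, `F₁* ∈ ℱ_Gauss` or `ℱ_↓`
(together with the competing `F₁` in the same class), and `β₂* ≠ 0`, then `P_{(π*,F₁*)}`
is identifiable. -/
theorem stmt_6 {p₁ p₂ : ℕ}
    (m : Measure (EuclideanSpace ℝ (Fin p₁) × EuclideanSpace ℝ (Fin p₂)))
    [IsProbabilityMeasure m]
    (S : Set (EuclideanSpace ℝ (Fin p₁))) (hSc : S.Countable) (hSne : S.Nonempty)
    (hSsupp : m.fst Sᶜ = 0)
    (xtilde : EuclideanSpace ℝ (Fin p₁)) (hatom : 0 < m.fst {xtilde})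
    (𝒳₂' : Set (EuclideanSpace ℝ (Fin p₂))) (h𝒳₂ne : 𝒳₂'.Nonempty)
    (h𝒳₂open : IsOpen 𝒳₂')
    (hcond : ∀ (z : EuclideanSpace ℝ (Fin p₂)) (r : ℝ), 0 < r →
      Metric.ball z r ⊆ 𝒳₂' → 0 < (m.condKernel xtilde) (Metric.ball z r))
    (g : ℝ → ℝ)
    (hg : (∀ t, g t = (1 + Real.exp (-t))⁻¹) ∨ (∀ t, g t = stdNormalCDF t))
    (F0 F1star F1 : ℝ → ℝ)
    (hclass : (IsGaussMixCDF F1star ∧ IsGaussMixCDF F1) ∨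
      (IsDecDensityDF F1star ∧ IsDecDensityDF F1))
    (hne : F0 ≠ F1star)
    (β₀star : ℝ) (β₁star : EuclideanSpace ℝ (Fin p₁))
    (β₂star : EuclideanSpace ℝ (Fin p₂)) (hβ₂star : β₂star ≠ 0)
    (πstar : EuclideanSpace ℝ (Fin p₁) × EuclideanSpace ℝ (Fin p₂) → ℝ)
    (hπstar : ∀ x, πstar x
      = g (β₀star + (∑ i, β₁star i * x.1 i) + ∑ j, β₂star j * x.2 j))
    (β₀ : ℝ) (β₁ : EuclideanSpace ℝ (Fin p₁)) (β₂ : EuclideanSpace ℝ (Fin p₂))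
    (π : EuclideanSpace ℝ (Fin p₁) × EuclideanSpace ℝ (Fin p₂) → ℝ)
    (hπ : ∀ x, π x = g (β₀ + (∑ i, β₁ i * x.1 i) + ∑ j, β₂ j * x.2 j))
    (heq : JointEq m F0 πstar F1star π F1) :
    (∀ᵐ x ∂m, π x = πstar x) ∧ F1 = F1star := by
  classical
  -- Basic facts about the link function `g`.
  have hg3 : Continuous g ∧ (∀ t, 0 < g t) ∧ (∀ t, g t ≤ 1) := by
    rcases hg with hgl | hgp
    · have hgfun : g = fun t => (1 + Real.exp (-t))⁻¹ := funext hgl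
      rw [hgfun]
      have h1 : ∀ t : ℝ, (0:ℝ) < 1 + Real.exp (-t) := fun t => by positivity
      refine ⟨?_, fun t => by positivity, fun t => ?_⟩
      · exact (continuous_const.add (Real.continuous_exp.comp continuous_neg)).inv₀
          fun t => (h1 t).ne'
      · have h2 : (1:ℝ) ≤ 1 + Real.exp (-t) := by linarith [Real.exp_pos (-t)]
        exact inv_le_one_of_one_le₀ h2
    · have hgfun : g = stdNormalCDF := funext hgp
      rw [hgfun]
      exact ⟨StmtAux.continuous_stdNormalCDF, StmtAux.stdNormalCDF_pos,
        StmtAux.stdNormalCDF_le_one⟩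
  obtain ⟨hgcont, hgpos, hgle⟩ := hg3
  -- Continuity and bounds for π and πstar.
  have haffcont : ∀ (c : ℝ) (b1 : EuclideanSpace ℝ (Fin p₁)) (b2 : EuclideanSpace ℝ (Fin p₂)),
      Continuous (fun x : EuclideanSpace ℝ (Fin p₁) × EuclideanSpace ℝ (Fin p₂) =>
        c + (∑ i, b1 i * x.1 i) + ∑ j, b2 j * x.2 j) := by
    intro c b1 b2
    refine Continuous.add (Continuous.add continuous_const ?_) ?_
    · exact continuous_finset_sum _ fun i _ =>
        continuous_const.mul ((EuclideanSpace.proj i).continuous.comp continuous_fst)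
    · exact continuous_finset_sum _ fun j _ =>
        continuous_const.mul ((EuclideanSpace.proj j).continuous.comp continuous_snd)
  have hπstarfun : πstar = fun x => g (β₀star + (∑ i, β₁star i * x.1 i) + ∑ j, β₂star j * x.2 j) :=
    funext hπstar
  have hπfun : π = fun x => g (β₀ + (∑ i, β₁ i * x.1 i) + ∑ j, β₂ j * x.2 j) := funext hπ
  have hπstarcont : Continuous πstar := by
    rw [hπstarfun]; exact hgcont.comp (haffcont _ _ _)
  have hπcont : Continuous π := by
    rw [hπfun]; exact hgcont.comp (haffcont _ _ _)
  have hπstarpos : ∀ x, 0 < πstar x := fun x => by rw [hπstar x]; exact hgpos _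
  have hπstarle : ∀ x, πstar x ≤ 1 := fun x => by rw [hπstar x]; exact hgle _
  have hπpos : ∀ x, 0 < π x := fun x => by rw [hπ x]; exact hgpos _
  have hπle : ∀ x, π x ≤ 1 := fun x => by rw [hπ x]; exact hgle _
  -- Integrability helper.
  have hintmul : ∀ (f : EuclideanSpace ℝ (Fin p₁) × EuclideanSpace ℝ (Fin p₂) → ℝ) (c : ℝ),
      Continuous f → (∀ x, 0 ≤ f x) → (∀ x, f x ≤ 1) →
      Integrable (fun x => f x * c) m := by
    intro f c hfc h0 h1
    refine Integrable.mono' (integrable_const |c|)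
      ((hfc.mul continuous_const).aestronglyMeasurable) (ae_of_all _ fun x => ?_)
    have h2 : |f x| ≤ 1 := abs_le.mpr ⟨by linarith [h0 x], h1 x⟩
    calc ‖f x * c‖ = |f x| * |c| := by rw [Real.norm_eq_abs, abs_mul]
    _ ≤ 1 * |c| := mul_le_mul_of_nonneg_right h2 (abs_nonneg c)
    _ = |c| := one_mul _
  -- Step 1: pointwise a.e. identity for every `y`.
  have hae1 : ∀ y : ℝ, ∀ᵐ x ∂m, πstar x * (F1star y - F0 y) = π x * (F1 y - F0 y) := by
    intro y
    have hi1 : Integrable (fun x => πstar x * (F1star y - F0 y)) m :=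
      hintmul _ _ hπstarcont (fun x => (hπstarpos x).le) hπstarle
    have hi2 : Integrable (fun x => π x * (F1 y - F0 y)) m :=
      hintmul _ _ hπcont (fun x => (hπpos x).le) hπle
    refine ae_eq_of_forall_setIntegral_eq_of_sigmaFinite
      (fun s _ _ => hi1.integrableOn) (fun s _ _ => hi2.integrableOn) ?_
    intro A hA _
    have h0 := heq A hA y
    have l1 : ∫ x in A, (πstar x * F1star y + (1 - πstar x) * F0 y) ∂m
        = (∫ x in A, πstar x * (F1star y - F0 y) ∂m) + (m A).toReal * F0 y := by
      rw [show (fun x => πstar x * F1star y + (1 - πstar x) * F0 y)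
          = fun x => πstar x * (F1star y - F0 y) + F0 y from funext fun x => by ring]
      rw [integral_add hi1.integrableOn (integrable_const _), setIntegral_const, smul_eq_mul, Measure.real]
    have l2 : ∫ x in A, (π x * F1 y + (1 - π x) * F0 y) ∂m
        = (∫ x in A, π x * (F1 y - F0 y) ∂m) + (m A).toReal * F0 y := by
      rw [show (fun x => π x * F1 y + (1 - π x) * F0 y)
          = fun x => π x * (F1 y - F0 y) + F0 y from funext fun x => by ring]
      rw [integral_add hi2.integrableOn (integrable_const _), setIntegral_const, smul_eq_mul, Measure.real]
    rw [l1, l2] at h0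
    linarith
  -- Step 2: the proportionality constant `lam`.
  have hmne : (MeasureTheory.ae m).NeBot := ae_neBot.mpr (IsProbabilityMeasure.ne_zero m)
  obtain ⟨y₀, hy₀⟩ : ∃ y₀, F0 y₀ ≠ F1star y₀ := by
    by_contra hcon
    push_neg at hcon
    exact hne (funext hcon)
  have hc₀ : F1star y₀ - F0 y₀ ≠ 0 := sub_ne_zero.mpr (Ne.symm hy₀)
  have hd₀ : F1 y₀ - F0 y₀ ≠ 0 := by
    intro h0
    obtain ⟨x, hx⟩ := (hae1 y₀).exists
    rw [h0, mul_zero] at hx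
    rcases mul_eq_zero.mp hx with h | h
    · exact absurd h (ne_of_gt (hπstarpos x))
    · exact hc₀ h
  set lam := (F1star y₀ - F0 y₀) / (F1 y₀ - F0 y₀) with hlamdef
  have hlamae : ∀ᵐ x ∂m, π x = lam * πstar x := by
    filter_upwards [hae1 y₀] with x hx
    rw [hlamdef]
    field_simp
    linear_combination -hx
  have hlampos : 0 < lam := by
    obtain ⟨x, hx⟩ := hlamae.exists
    by_contra hcon
    push_neg at hcon
    have h1 : lam * πstar x ≤ 0 := mul_nonpos_of_nonpos_of_nonneg hcon (hπstarpos x).le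
    linarith [hπpos x, hx ▸ h1]
  -- Step 3: F1star - F0 = lam * (F1 - F0) everywhere.
  have hkey : ∀ y, F1star y - F0 y = lam * (F1 y - F0 y) := by
    intro y
    obtain ⟨x, hx1, hx2⟩ := ((hae1 y).and hlamae).exists
    have h3 : πstar x * (F1star y - F0 y) = πstar x * (lam * (F1 y - F0 y)) := by
      calc πstar x * (F1star y - F0 y) = π x * (F1 y - F0 y) := hx1
      _ = lam * πstar x * (F1 y - F0 y) := by rw [hx2]
      _ = πstar x * (lam * (F1 y - F0 y)) := by ring
    exact mul_left_cancel₀ (ne_of_gt (hπstarpos x)) h3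
  -- Step 4: lam = 1, using the structure of the link and the continuous covariate.
  have hcomp : m.fst ⊗ₘ m.condKernel = m := m.disintegrate m.condKernel
  have hlamae2 : ∀ᵐ x ∂(m.fst ⊗ₘ m.condKernel), π x = lam * πstar x := by
    rw [hcomp]; exact hlamae
  have hae3 := MeasureTheory.Measure.ae_ae_of_ae_compProd hlamae2
  have hxt : ∀ᵐ x₂ ∂(m.condKernel xtilde), π (xtilde, x₂) = lam * πstar (xtilde, x₂) := by
    by_contra hcon
    rw [MeasureTheory.ae_iff] at hae3
    have h1 : m.fst {xtilde} = 0 := by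
      refine measure_mono_null ?_ hae3
      intro z hz
      rw [Set.mem_singleton_iff] at hz
      subst hz
      simpa using hcon
    exact absurd h1 hatom.ne'
  set u₁ : ℝ := β₀ + ∑ i, β₁ i * xtilde i with hu₁
  set v₁ : ℝ := β₀star + ∑ i, β₁star i * xtilde i with hv₁
  have hxt' : ∀ᵐ z ∂(m.condKernel xtilde),
      g (u₁ + ∑ j, β₂ j * z j) = lam * g (v₁ + ∑ j, β₂star j * z j) := by
    filter_upwards [hxt] with z hz
    rw [hπ, hπstar] at hz
    rw [hu₁, hv₁]
    exact hz
  set H : EuclideanSpace ℝ (Fin p₂) → ℝ :=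
    fun z => g (u₁ + ∑ j, β₂ j * z j) - lam * g (v₁ + ∑ j, β₂star j * z j) with hHdef
  have hHcont : Continuous H := by
    have hc1 : Continuous fun z : EuclideanSpace ℝ (Fin p₂) => u₁ + ∑ j, β₂ j * z j :=
      continuous_const.add (continuous_finset_sum _ fun j _ =>
        continuous_const.mul (EuclideanSpace.proj j).continuous)
    have hc2 : Continuous fun z : EuclideanSpace ℝ (Fin p₂) => v₁ + ∑ j, β₂star j * z j :=
      continuous_const.add (continuous_finset_sum _ fun j _ =>
        continuous_const.mul (EuclideanSpace.proj j).continuous)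
    exact (hgcont.comp hc1).sub (continuous_const.mul (hgcont.comp hc2))
  have hHnull : (m.condKernel xtilde) {z | H z ≠ 0} = 0 := by
    have h2 := hxt'
    rw [MeasureTheory.ae_iff] at h2
    refine measure_mono_null ?_ h2
    intro z hz
    simp only [Set.mem_setOf_eq, hHdef] at hz ⊢
    intro he
    exact hz (by rw [he]; ring)
  have hH0 : ∀ z ∈ 𝒳₂', H z = 0 := by
    intro z hz
    by_contra hne'
    have hopen : IsOpen ({z | H z ≠ 0} ∩ 𝒳₂') :=
      ((isOpen_compl_singleton.preimage hHcont).inter h𝒳₂open)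
    obtain ⟨r, hr, hball⟩ := Metric.isOpen_iff.mp hopen z ⟨hne', hz⟩
    have hpos := hcond z r hr (fun w hw => (hball hw).2)
    have h0 : (m.condKernel xtilde) (Metric.ball z r) = 0 :=
      measure_mono_null (fun w hw => (hball hw).1) hHnull
    rw [h0] at hpos
    exact lt_irrefl _ hpos
  obtain ⟨z₀, hz₀⟩ := h𝒳₂ne
  obtain ⟨r₀, hr₀, hball₀⟩ := Metric.isOpen_iff.mp h𝒳₂open z₀ hz₀
  set δ := r₀ / (‖β₂star‖ + 1) with hδdef
  have hδpos : 0 < δ := div_pos hr₀ (by positivity)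
  set sc := ∑ j, β₂ j * β₂star j with hsc
  set wc := ∑ j, β₂star j * β₂star j with hwc
  have hwpos : 0 < wc := by
    obtain ⟨j, hj⟩ : ∃ j, β₂star j ≠ 0 := by
      by_contra hcon
      push_neg at hcon
      exact hβ₂star (PiLp.ext fun j => by simp [hcon j])
    rw [hwc]
    exact Finset.sum_pos' (fun j _ => mul_self_nonneg _)
      ⟨j, Finset.mem_univ j, mul_self_pos.mpr hj⟩
  have hline : ∀ t ∈ Set.Ioo (-δ) δ,
      g ((u₁ + ∑ j, β₂ j * z₀ j) + sc * t)
        = lam * g ((v₁ + ∑ j, β₂star j * z₀ j) + wc * t) := by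
    intro t ht
    have hmem : z₀ + t • β₂star ∈ 𝒳₂' := by
      apply hball₀
      rw [Metric.mem_ball, dist_eq_norm]
      have he : z₀ + t • β₂star - z₀ = t • β₂star := by abel
      rw [he, norm_smul, Real.norm_eq_abs]
      have habs : |t| < δ := abs_lt.mpr ⟨ht.1, ht.2⟩
      calc |t| * ‖β₂star‖ ≤ |t| * (‖β₂star‖ + 1) :=
            mul_le_mul_of_nonneg_left (by linarith) (abs_nonneg t)
      _ < δ * (‖β₂star‖ + 1) := mul_lt_mul_of_pos_right habs (by positivity)
      _ = r₀ := by rw [hδdef]; field_simp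
    have h00 := hH0 _ hmem
    simp only [hHdef] at h00
    have hexp1 : ∑ j, β₂ j * (z₀ + t • β₂star) j = (∑ j, β₂ j * z₀ j) + sc * t := by
      calc ∑ j, β₂ j * (z₀ + t • β₂star) j
          = ∑ j, (β₂ j * z₀ j + (β₂ j * β₂star j) * t) := by
            refine Finset.sum_congr rfl fun j _ => ?_
            simp only [PiLp.add_apply, PiLp.smul_apply, smul_eq_mul]
            ring
      _ = (∑ j, β₂ j * z₀ j) + (∑ j, β₂ j * β₂star j) * t := by
            rw [Finset.sum_add_distrib, Finset.sum_mul]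
      _ = (∑ j, β₂ j * z₀ j) + sc * t := by rw [hsc]
    have hexp2 : ∑ j, β₂star j * (z₀ + t • β₂star) j
        = (∑ j, β₂star j * z₀ j) + wc * t := by
      calc ∑ j, β₂star j * (z₀ + t • β₂star) j
          = ∑ j, (β₂star j * z₀ j + (β₂star j * β₂star j) * t) := by
            refine Finset.sum_congr rfl fun j _ => ?_
            simp only [PiLp.add_apply, PiLp.smul_apply, smul_eq_mul]
            ring
      _ = (∑ j, β₂star j * z₀ j) + (∑ j, β₂star j * β₂star j) * t := by
            rw [Finset.sum_add_distrib, Finset.sum_mul]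
      _ = (∑ j, β₂star j * z₀ j) + wc * t := by rw [hwc]
    rw [hexp1, hexp2, ← add_assoc, ← add_assoc] at h00
    linarith
  have hlam1 : lam = 1 := by
    rcases hg with hgl | hgp
    · refine StmtAux.key_logistic (u := u₁ + ∑ j, β₂ j * z₀ j) (v := v₁ + ∑ j, β₂star j * z₀ j)
        (s := sc) (w := wc) (a := -δ) (b := δ) hlampos hwpos (by linarith) ?_
      intro t ht
      have h1 := hline t ht
      rw [hgl, hgl] at h1
      exact h1
    · refine StmtAux.key_probit (u := u₁ + ∑ j, β₂ j * z₀ j) (v := v₁ + ∑ j, β₂star j * z₀ j)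
        (s := sc) (w := wc) (a := -δ) (b := δ) hlampos hwpos (by linarith) ?_
      intro t ht
      have h1 := hline t ht
      rw [hgp, hgp] at h1
      exact h1
  constructor
  · filter_upwards [hlamae] with x hx
    rw [hx, hlam1, one_mul]
  · funext y
    have h2 := hkey y
    rw [hlam1, one_mul] at h2
    linarith


end
end

section
/- Let m be a probability measure on ℝ supported on {0,1}, F₀ = Φ the standard normal distribution function, ℱ = ℱ_Gauss, and Π the logistic class {x ↦ (1 + exp(β₀ + β₁x))⁻¹ : β₀, β₁ ∈ ℝ}. Let π* ∈ Π and F₁* ∈ ℱ_Gauss with F₁* ≠ Φ. Then there exist c ∈ (0,1) and (β̃₀, β̃₁) ∈ ℝ² such that the logistic function π̃(x) = (1 + exp(β̃₀ + β̃₁x))⁻¹ satisfies π̃(x) = π*(x)/(1 − c) for x ∈ {0,1}; moreover F̃₁ := cΦ + (1 − c)F₁* belongs to ℱ_Gauss, (π̃, F̃₁) differs from (π*, F₁*), and P_{(π̃,F̃₁)} = P_{(π*,F₁*)}. Hence the model is not identifiable. -/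
open MeasureTheory ProbabilityTheory

noncomputable section

lemma stdNormalCDF_mono : Monotone stdNormalCDF := by
  intro a b hab
  exact ENNReal.toReal_mono (measure_ne_top _ _) (measure_mono (Set.Iic_subset_Iic.2 hab))

lemma stdNormalCDF_meas : Measurable stdNormalCDF := stdNormalCDF_mono.measurable

lemma stdNormalCDF_nonneg (y : ℝ) : 0 ≤ stdNormalCDF y := ENNReal.toReal_nonneg

lemma integrable_shift (y : ℝ) (G : Measure ℝ) [IsProbabilityMeasure G] :
    Integrable (fun u => stdNormalCDF (y - u)) G := by
  refine (integrable_const (1:ℝ)).mono' ?_ ?_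
  · exact (stdNormalCDF_meas.comp (measurable_const.sub measurable_id)).aestronglyMeasurable
  · refine Filter.Eventually.of_forall fun u => ?_
    rw [Real.norm_eq_abs, abs_of_nonneg (stdNormalCDF_nonneg _)]
    exact stdNormalCDF_le_one _

lemma mix_isGaussMix (c : ℝ) (hc0 : 0 ≤ c) (hc1 : c ≤ 1) (F1 : ℝ → ℝ)
    (hF1 : IsGaussMixCDF F1) :
    IsGaussMixCDF (fun y => c * stdNormalCDF y + (1 - c) * F1 y) := by
  obtain ⟨G₁, hG₁, hG₁eq⟩ := hF1
  refine ⟨ENNReal.ofReal c • Measure.dirac 0 + ENNReal.ofReal (1 - c) • G₁, ?_, ?_⟩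
  · constructor
    simp only [Measure.add_apply, Measure.smul_apply, measure_univ, smul_eq_mul, mul_one,
      Measure.coe_add, Pi.add_apply]
    rw [← ENNReal.ofReal_add hc0 (by linarith)]
    norm_num
  · intro y
    have hmeas : Measurable (fun u => stdNormalCDF (y - u)) :=
      stdNormalCDF_meas.comp (measurable_const.sub measurable_id)
    rw [integral_add_measure, integral_smul_measure, integral_smul_measure,
      integral_dirac' _ _ hmeas.stronglyMeasurable]
    · rw [ENNReal.toReal_ofReal hc0, ENNReal.toReal_ofReal (by linarith)]
      simp [hG₁eq y, smul_eq_mul]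
    · exact (integrable_shift y (Measure.dirac 0)).smul_measure (by simp)
    · exact (integrable_shift y G₁).smul_measure (by simp)

/-- Remark `logitnoniden`: with a binary covariate supported on `{0,1}`,
the logistic-Gaussian-mixture model is not identifiable: for any logistic `π*` and any
`F₁* ∈ ℱ_Gauss` with `F₁* ≠ Φ`, there exist `c ∈ (0,1)` and logistic parameters
`(β̃₀, β̃₁)` such that `π̃ = π*/(1-c)` on `{0,1}`, `F̃₁ := cΦ + (1-c)F₁* ∈ ℱ_Gauss`,
`(π̃, F̃₁) ≠ (π*, F₁*)`, and the joint distributions coincide. -/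
theorem stmt_7 (m : Measure ℝ) [IsProbabilityMeasure m]
    (hsupp : m ({0, 1} : Set ℝ)ᶜ = 0)
    (β₀star β₁star : ℝ) (πstar : ℝ → ℝ)
    (hπstar : ∀ x, πstar x = (1 + Real.exp (β₀star + β₁star * x))⁻¹)
    (F1star : ℝ → ℝ) (hF1 : IsGaussMixCDF F1star) (hne : F1star ≠ stdNormalCDF) :
    ∃ c ∈ Set.Ioo (0:ℝ) 1, ∃ βt₀ βt₁ : ℝ,
      (∀ x ∈ ({0, 1} : Set ℝ),
        (1 + Real.exp (βt₀ + βt₁ * x))⁻¹ = πstar x / (1 - c)) ∧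
      IsGaussMixCDF (fun y => c * stdNormalCDF y + (1 - c) * F1star y) ∧
      (((fun x => (1 + Real.exp (βt₀ + βt₁ * x))⁻¹ : ℝ → ℝ),
          (fun y => c * stdNormalCDF y + (1 - c) * F1star y : ℝ → ℝ))
        ≠ (πstar, F1star)) ∧
      JointEq m stdNormalCDF πstar F1star
        (fun x => (1 + Real.exp (βt₀ + βt₁ * x))⁻¹)
        (fun y => c * stdNormalCDF y + (1 - c) * F1star y) := by
  -- basic bounds on πstar at any x
  have hπpos : ∀ x, 0 < πstar x := by
    intro x; rw [hπstar x]
    positivity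
  have hπlt1 : ∀ x, πstar x < 1 := by
    intro x; rw [hπstar x]
    rw [inv_lt_one_iff₀]
    right; linarith [Real.exp_pos (β₀star + β₁star * x)]
  set π0 := πstar 0 with hπ0
  set π1 := πstar 1 with hπ1
  set c : ℝ := min (1 - π0) (1 - π1) / 2 with hc
  have hc0 : 0 < c := by
    have := hπlt1 0; have := hπlt1 1
    have : 0 < min (1 - π0) (1 - π1) := lt_min (by linarith) (by linarith)
    positivity
  have hc1 : c < 1 := by
    have h0 := hπpos 0
    have : min (1 - π0) (1 - π1) ≤ 1 - π0 := min_le_left _ _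
    simp only [hc]; linarith
  have h1c : (0:ℝ) < 1 - c := by linarith
  have hπ0lt : π0 < 1 - c := by
    have : min (1 - π0) (1 - π1) ≤ 1 - π0 := min_le_left _ _
    simp only [hc]; linarith [hπlt1 0]
  have hπ1lt : π1 < 1 - c := by
    have : min (1 - π0) (1 - π1) ≤ 1 - π1 := min_le_right _ _
    simp only [hc]; linarith [hπlt1 1]
  -- targets
  set p0 : ℝ := π0 / (1 - c) with hp0
  set p1 : ℝ := π1 / (1 - c) with hp1
  have hp0pos : 0 < p0 := div_pos (hπpos 0) h1c
  have hp1pos : 0 < p1 := div_pos (hπpos 1) h1c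
  have hp0lt : p0 < 1 := (div_lt_one h1c).2 hπ0lt
  have hp1lt : p1 < 1 := (div_lt_one h1c).2 hπ1lt
  have hq0 : 0 < p0⁻¹ - 1 := by
    rw [sub_pos]; exact (one_lt_inv₀ hp0pos).2 hp0lt
  have hq1 : 0 < p1⁻¹ - 1 := by
    rw [sub_pos]; exact (one_lt_inv₀ hp1pos).2 hp1lt
  set βt₀ : ℝ := Real.log (p0⁻¹ - 1) with hβt₀
  set βt₁ : ℝ := Real.log (p1⁻¹ - 1) - βt₀ with hβt₁
  have hval0 : (1 + Real.exp (βt₀ + βt₁ * 0))⁻¹ = p0 := by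
    rw [mul_zero, add_zero, hβt₀, Real.exp_log hq0]
    field_simp
    ring
  have hval1 : (1 + Real.exp (βt₀ + βt₁ * 1))⁻¹ = p1 := by
    rw [mul_one, hβt₁]
    rw [show βt₀ + (Real.log (p1⁻¹ - 1) - βt₀) = Real.log (p1⁻¹ - 1) by ring,
      Real.exp_log hq1]
    field_simp
    ring
  refine ⟨c, ⟨hc0, hc1⟩, βt₀, βt₁, ?_, ?_, ?_, ?_⟩
  · intro x hx
    rcases hx with hx | hx
    · subst hx; exact hval0
    · simp only [Set.mem_singleton_iff] at hx; subst hx; exact hval1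
  · exact mix_isGaussMix c hc0.le hc1.le F1star hF1
  · -- the pairs differ in the second component
    intro h
    apply hne
    have h2 : (fun y => c * stdNormalCDF y + (1 - c) * F1star y) = F1star :=
      congrArg Prod.snd h
    funext y
    have := congrFun h2 y
    have hy : c * stdNormalCDF y = c * F1star y := by linarith
    have := mul_left_cancel₀ (ne_of_gt hc0) hy
    linarith
  · -- joint distributions coincide
    intro A hA y
    refine integral_congr_ae (ae_restrict_of_ae ?_)
    have hmem : ∀ᵐ x ∂m, x ∈ ({0, 1} : Set ℝ) := by
      rw [MeasureTheory.ae_iff]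
      convert hsupp using 2
      rfl
    filter_upwards [hmem] with x hx
    have hπt : (1 + Real.exp (βt₀ + βt₁ * x))⁻¹ = πstar x / (1 - c) := by
      rcases hx with hx | hx
      · subst hx; exact hval0
      · simp only [Set.mem_singleton_iff] at hx; subst hx; exact hval1
    rw [hπt]
    field_simp
    ring
end
end

section
/- Let Θ ⊂ ℝ^{p+1} be a set with ‖θ‖_∞ ≤ K for all θ ∈ Θ, and let g : ℝ → [0,1] be differentiable with |g'(z)| ≤ c₁ for all z. For θ = (β, μ) ∈ Θ define m_θ(x,y) := −(y − μ g(xᵀβ))². Then for all θ₁, θ₂ ∈ Θ and all (x,y) ∈ ℝ^p × ℝ: |m_{θ₁}(x,y) − m_{θ₂}(x,y)| ≤ m̃(x,y)‖θ₁ − θ₂‖, where m̃(x,y) := 2(|y| + K)(1 + K c₁ ‖x‖). Moreover, if E Y⁴ < ∞ and E‖X‖⁴ < ∞, then E[m̃(X,Y)²] < ∞. -/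
open MeasureTheory
open RealInnerProductSpace

noncomputable section

/-- The linear predictor `xᵀβ`, where `β` consists of the first `p` coordinates of
`θ ∈ ℝ^{p+1}`. -/
def dotX {p : ℕ} (x : EuclideanSpace ℝ (Fin p)) (θ : EuclideanSpace ℝ (Fin (p + 1))) : ℝ :=
  ∑ i : Fin p, x i * θ i.castSucc

/-- The coordinate `μ`, the last coordinate of `θ = (β, μ) ∈ ℝ^{p+1}`. -/
def muOf {p : ℕ} (θ : EuclideanSpace ℝ (Fin (p + 1))) : ℝ := θ (Fin.last p)

/-- The criterion function `m_θ(x,y) = -(y - μ g(xᵀβ))²`. -/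
def mFun {p : ℕ} (g : ℝ → ℝ) (θ : EuclideanSpace ℝ (Fin (p + 1)))
    (x : EuclideanSpace ℝ (Fin p)) (y : ℝ) : ℝ :=
  -(y - muOf θ * g (dotX x θ)) ^ 2

/-- The envelope function `m̃(x,y) = 2(|y| + K)(1 + K c₁ ‖x‖)`. -/
def mTilde {p : ℕ} (K c₁ : ℝ) (x : EuclideanSpace ℝ (Fin p)) (y : ℝ) : ℝ :=
  2 * (|y| + K) * (1 + K * c₁ * ‖x‖)

lemma coord_le_norm {n : ℕ} (v : EuclideanSpace ℝ (Fin n)) (i : Fin n) : |v i| ≤ ‖v‖ := by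
  rw [EuclideanSpace.norm_eq]
  have h1 : |v i| = Real.sqrt (‖v i‖ ^ 2) := by
    rw [Real.sqrt_sq_eq_abs]; simp [abs_abs]
  rw [h1]
  apply Real.sqrt_le_sqrt
  exact Finset.single_le_sum (f := fun j => ‖v j‖ ^ 2) (fun j _ => by positivity) (Finset.mem_univ i)

lemma beta_le_norm {p : ℕ} (θ : EuclideanSpace ℝ (Fin (p + 1))) :
    ‖(EuclideanSpace.equiv (Fin p) ℝ).symm (fun i => θ i.castSucc)‖ ≤ ‖θ‖ := by
  rw [EuclideanSpace.norm_eq, EuclideanSpace.norm_eq]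
  apply Real.sqrt_le_sqrt
  rw [Fin.sum_univ_castSucc (f := fun j => ‖θ j‖ ^ 2)]
  have : ∀ i : Fin p, ‖((EuclideanSpace.equiv (Fin p) ℝ).symm (fun i => θ i.castSucc)) i‖ = ‖θ i.castSucc‖ := fun i => rfl
  simp only [this]
  nlinarith [norm_nonneg (θ (Fin.last p))]

lemma dot_sub {p : ℕ} (x : EuclideanSpace ℝ (Fin p)) (θ₁ θ₂ : EuclideanSpace ℝ (Fin (p + 1))) :
    |dotX x θ₁ - dotX x θ₂| ≤ ‖x‖ * ‖θ₁ - θ₂‖ := by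
  set v : EuclideanSpace ℝ (Fin p) := (EuclideanSpace.equiv (Fin p) ℝ).symm (fun i => (θ₁ - θ₂) i.castSucc)
  have hd : dotX x θ₁ - dotX x θ₂ = ⟪x, v⟫ := by
    rw [PiLp.inner_apply]
    simp only [dotX, ← Finset.sum_sub_distrib]
    congr 1; ext i
    have : v i = θ₁ i.castSucc - θ₂ i.castSucc := by
      show (θ₁ - θ₂) i.castSucc = _; simp [PiLp.sub_apply]
    rw [this]; simp [RCLike.inner_apply]; ring
  rw [hd]
  calc |⟪x, v⟫| ≤ ‖x‖ * ‖v‖ := abs_real_inner_le_norm x v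
    _ ≤ ‖x‖ * ‖θ₁ - θ₂‖ := by
        gcongr
        exact beta_le_norm (θ₁ - θ₂)

/-- Lipschitz property `con2` in the proof of Theorem `cor:Mar-2`:
on a sup-norm bounded parameter set `Θ`, `θ ↦ m_θ(x,y)` is Lipschitz with (random)
constant `m̃(x,y) = 2(|y|+K)(1+Kc₁‖x‖)`; moreover `m̃(X,Y)` is square-integrable whenever
`Y` and `‖X‖` have finite fourth moments. -/
theorem stmt_18 {p : ℕ} (K c₁ : ℝ)
    (Θ : Set (EuclideanSpace ℝ (Fin (p + 1))))
    (hΘ : ∀ θ ∈ Θ, ∀ i, |θ i| ≤ K)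
    (g : ℝ → ℝ) (hg01 : ∀ z, g z ∈ Set.Icc (0:ℝ) 1)
    (hgdiff : Differentiable ℝ g) (hgd : ∀ z, |deriv g z| ≤ c₁) :
    (∀ θ₁ ∈ Θ, ∀ θ₂ ∈ Θ, ∀ (x : EuclideanSpace ℝ (Fin p)) (y : ℝ),
      |mFun g θ₁ x y - mFun g θ₂ x y| ≤ mTilde K c₁ x y * ‖θ₁ - θ₂‖) ∧
    ∀ (Ω : Type) (_ : MeasurableSpace Ω) (P : Measure Ω),
      IsProbabilityMeasure P →
      ∀ (X : Ω → EuclideanSpace ℝ (Fin p)) (Y : Ω → ℝ),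
        Measurable X → Measurable Y →
        Integrable (fun ω => Y ω ^ 4) P →
        Integrable (fun ω => ‖X ω‖ ^ 4) P →
        Integrable (fun ω => mTilde K c₁ (X ω) (Y ω) ^ 2) P := by
  have hc : (0:ℝ) ≤ c₁ := le_trans (abs_nonneg _) (hgd 0)
  have hlip : ∀ s t : ℝ, |g s - g t| ≤ c₁ * |s - t| := by
    intro s t
    have := convex_univ.norm_image_sub_le_of_norm_hasDerivWithin_le (f := g) (f' := deriv g)
      (fun z _ => (hgdiff z).hasDerivAt.hasDerivWithinAt) (fun z _ => by
        rw [Real.norm_eq_abs]; exact hgd z) (Set.mem_univ t) (Set.mem_univ s)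
    simpa [Real.norm_eq_abs] using this
  constructor
  · intro θ₁ h1 θ₂ h2 x y
    have hK : (0:ℝ) ≤ K := le_trans (abs_nonneg _) (hΘ θ₁ h1 (Fin.last p))
    set a := muOf θ₁ * g (dotX x θ₁) with ha_def
    set b := muOf θ₂ * g (dotX x θ₂) with hb_def
    have hga : |g (dotX x θ₁)| ≤ 1 :=
      abs_le.2 ⟨by linarith [(hg01 (dotX x θ₁)).1], (hg01 (dotX x θ₁)).2⟩
    have hgb : |g (dotX x θ₂)| ≤ 1 :=
      abs_le.2 ⟨by linarith [(hg01 (dotX x θ₂)).1], (hg01 (dotX x θ₂)).2⟩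
    have ha : |a| ≤ K := by
      rw [ha_def, abs_mul]
      calc |muOf θ₁| * |g (dotX x θ₁)| ≤ K * 1 :=
            mul_le_mul (hΘ θ₁ h1 (Fin.last p)) hga (abs_nonneg _) hK
        _ = K := mul_one K
    have hb : |b| ≤ K := by
      rw [hb_def, abs_mul]
      calc |muOf θ₂| * |g (dotX x θ₂)| ≤ K * 1 :=
            mul_le_mul (hΘ θ₂ h2 (Fin.last p)) hgb (abs_nonneg _) hK
        _ = K := mul_one K
    have hmu : |muOf θ₁ - muOf θ₂| ≤ ‖θ₁ - θ₂‖ := by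
      have := coord_le_norm (θ₁ - θ₂) (Fin.last p)
      simpa [muOf, PiLp.sub_apply] using this
    have hdt : |dotX x θ₁ - dotX x θ₂| ≤ ‖x‖ * ‖θ₁ - θ₂‖ := dot_sub x θ₁ θ₂
    have hab : |a - b| ≤ (1 + K * c₁ * ‖x‖) * ‖θ₁ - θ₂‖ := by
      have hsplit : a - b = (muOf θ₁ - muOf θ₂) * g (dotX x θ₁)
          + muOf θ₂ * (g (dotX x θ₁) - g (dotX x θ₂)) := by
        rw [ha_def, hb_def]; ring
      rw [hsplit]
      calc |(muOf θ₁ - muOf θ₂) * g (dotX x θ₁)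
            + muOf θ₂ * (g (dotX x θ₁) - g (dotX x θ₂))|
          ≤ |(muOf θ₁ - muOf θ₂) * g (dotX x θ₁)|
            + |muOf θ₂ * (g (dotX x θ₁) - g (dotX x θ₂))| := abs_add_le _ _
        _ = |muOf θ₁ - muOf θ₂| * |g (dotX x θ₁)|
            + |muOf θ₂| * |g (dotX x θ₁) - g (dotX x θ₂)| := by rw [abs_mul, abs_mul]
        _ ≤ ‖θ₁ - θ₂‖ * 1 + K * (c₁ * (‖x‖ * ‖θ₁ - θ₂‖)) := by
            have t2 : |g (dotX x θ₁) - g (dotX x θ₂)| ≤ c₁ * (‖x‖ * ‖θ₁ - θ₂‖) :=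
              calc |g (dotX x θ₁) - g (dotX x θ₂)| ≤ c₁ * |dotX x θ₁ - dotX x θ₂| := hlip _ _
                _ ≤ c₁ * (‖x‖ * ‖θ₁ - θ₂‖) := by gcongr
            have t1 : |muOf θ₁ - muOf θ₂| * |g (dotX x θ₁)| ≤ ‖θ₁ - θ₂‖ * 1 :=
              mul_le_mul hmu hga (abs_nonneg _) (norm_nonneg _)
            have t3 : |muOf θ₂| * |g (dotX x θ₁) - g (dotX x θ₂)|
                ≤ K * (c₁ * (‖x‖ * ‖θ₁ - θ₂‖)) :=
              mul_le_mul (hΘ θ₂ h2 (Fin.last p)) t2 (abs_nonneg _) hK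
            linarith
        _ = (1 + K * c₁ * ‖x‖) * ‖θ₁ - θ₂‖ := by ring
    have key : mFun g θ₁ x y - mFun g θ₂ x y = (a - b) * (2 * y - a - b) := by
      simp only [mFun, ← ha_def, ← hb_def]; ring
    rw [key, abs_mul, mTilde]
    have h2y : |2 * y - a - b| ≤ 2 * (|y| + K) := by
      have e0 : 2 * y - a - b = 2 * y + -a + -b := by ring
      have e1 := abs_add_three (2 * y) (-a) (-b)
      rw [abs_neg, abs_neg] at e1
      have e2 : |2 * y| = 2 * |y| := by rw [abs_mul, abs_two]
      rw [e0]
      linarith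
    calc |a - b| * |2 * y - a - b|
        ≤ ((1 + K * c₁ * ‖x‖) * ‖θ₁ - θ₂‖) * (2 * (|y| + K)) :=
          mul_le_mul hab h2y (abs_nonneg _) (by positivity)
      _ = 2 * (|y| + K) * (1 + K * c₁ * ‖x‖) * ‖θ₁ - θ₂‖ := by ring
  · intro Ω _ P hP X Y hX hY hY4 hX4
    have hmeas : Measurable fun ω => mTilde K c₁ (X ω) (Y ω) ^ 2 := by
      apply Measurable.pow_const
      exact ((measurable_const.mul (hY.abs.add measurable_const)).mul
        (measurable_const.add (measurable_const.mul hX.norm)))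
    set C : ℝ := 32 * (1 + K ^ 2) * (1 + (K * c₁) ^ 2) with hC
    have hdom : MeasureTheory.Integrable (fun ω => C * (1 + Y ω ^ 4 + ‖X ω‖ ^ 4)) P := by
      exact (((MeasureTheory.integrable_const (1:ℝ)).add hY4).add hX4).const_mul C
    apply hdom.mono' hmeas.aestronglyMeasurable
    filter_upwards with ω
    set A := |Y ω| with hA
    set B := ‖X ω‖ with hB
    have hA0 : 0 ≤ A := abs_nonneg _
    have hB0 : 0 ≤ B := norm_nonneg _
    have hY4' : Y ω ^ 4 = A ^ 4 := by
      rw [hA, ← abs_pow]; exact (abs_of_nonneg (by positivity)).symm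
    rw [Real.norm_eq_abs, abs_of_nonneg (by positivity), mTilde, hY4']
    have h1 : (A + K) ^ 2 ≤ 2 * (1 + K ^ 2) * (1 + A ^ 2) := by
      nlinarith [sq_nonneg (A - K), sq_nonneg (K * A), sq_nonneg A, sq_nonneg K]
    have h2 : (1 + K * c₁ * B) ^ 2 ≤ 2 * (1 + (K * c₁) ^ 2) * (1 + B ^ 2) := by
      nlinarith [sq_nonneg (1 - K * c₁ * B), sq_nonneg (K * c₁ * B), sq_nonneg (K * c₁)]
    have h3 : (1 + A ^ 2) * (1 + B ^ 2) ≤ 2 * (1 + A ^ 4 + B ^ 4) := by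
      nlinarith [sq_nonneg (A ^ 2 - 1), sq_nonneg (B ^ 2 - 1), sq_nonneg (A ^ 2 - B ^ 2)]
    have h4 : (A + K) ^ 2 * (1 + K * c₁ * B) ^ 2
        ≤ (2 * (1 + K ^ 2) * (1 + A ^ 2)) * (2 * (1 + (K * c₁) ^ 2) * (1 + B ^ 2)) :=
      mul_le_mul h1 h2 (sq_nonneg _) (by positivity)
    calc (2 * (A + K) * (1 + K * c₁ * B)) ^ 2
        = 4 * ((A + K) ^ 2 * (1 + K * c₁ * B) ^ 2) := by ring
      _ ≤ 4 * ((2 * (1 + K ^ 2) * (1 + A ^ 2)) * (2 * (1 + (K * c₁) ^ 2) * (1 + B ^ 2))) := by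
          linarith
      _ = 16 * (1 + K ^ 2) * (1 + (K * c₁) ^ 2) * ((1 + A ^ 2) * (1 + B ^ 2)) := by ring
      _ ≤ 16 * (1 + K ^ 2) * (1 + (K * c₁) ^ 2) * (2 * (1 + A ^ 4 + B ^ 4)) := by
          gcongr
      _ = C * (1 + A ^ 4 + B ^ 4) := by rw [hC]; ring

end
end
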